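/- arXiv:1308.0180 — 8 statements merged into one kernel-verified Lean document; each statement's English description precedes it below -/
import Mathlib

section
/- Let X, Y, Z be pairwise congruent walks of length n in a digraph H. Then Z protects Y from X if and only if there exists a subscript s such that the initial segment x₀,…,x_s avoids z₀,…,z_s and the final segment z_{s+1},…,z_n avoids y_{s+1},…,y_n. -/
namespace DigraphListHom

variable {V W : Type*}

/-- One step of a walk: forward if `dir = true`, backward otherwise. -/
def Step (H : V → V → Prop) (u v : V) (dir : Bool) : Prop :=
  if dir then H u v else H v u

/-- `x` is a walk in `H` with direction pattern `d`. -/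
def IsWalk (H : V → V → Prop) {n : ℕ} (d : Fin n → Bool) (x : Fin (n + 1) → V) : Prop :=
  ∀ i : Fin n, Step H (x i.castSucc) (x i.succ) (d i)

/-- `x_i y_{i+1}` is a faithful edge from `X` to `Y` at position `i`. -/
def FaithfulAt (H : V → V → Prop) {n : ℕ} (d : Fin n → Bool) (x y : Fin (n + 1) → V)
    (i : Fin n) : Prop :=
  Step H (x i.castSucc) (y i.succ) (d i)

/-- `X` avoids `Y`: there is no faithful edge from `X` to `Y`. -/
def Avoids (H : V → V → Prop) {n : ℕ} (d : Fin n → Bool) (x y : Fin (n + 1) → V) : Prop :=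
  ∀ i, ¬ FaithfulAt H d x y i

/-- `Z` protects `Y` from `X`: faithful edges `x_i z_{i+1}` and `z_j y_{j+1}` imply `j ≤ i`. -/
def Protects (H : V → V → Prop) {n : ℕ} (d : Fin n → Bool) (x y z : Fin (n + 1) → V) : Prop :=
  ∀ i j : Fin n, FaithfulAt H d x z i → FaithfulAt H d z y j → (j : ℕ) ≤ (i : ℕ)

/-- `H` contains a circular `N`: congruent walks `X` from `x` to `x`, `Y` from `y` to `y`,
`Z` from `y` to `x`, with `X` avoiding `Y` and `Z` protecting `Y` from `X`. -/
def CircularN (H : V → V → Prop) : Prop :=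
  ∃ n : ℕ, 0 < n ∧ ∃ (d : Fin n → Bool) (x y z : Fin (n + 1) → V),
    IsWalk H d x ∧ IsWalk H d y ∧ IsWalk H d z ∧
    x (Fin.last n) = x 0 ∧ y (Fin.last n) = y 0 ∧
    z 0 = y 0 ∧ z (Fin.last n) = x 0 ∧
    Avoids H d x y ∧ Protects H d x y z

/-- Arc relation of the pair digraph `H⁺` (on ambient pairs). -/
def PairArc (H : V → V → Prop) (p q : V × V) : Prop :=
  (H p.1 q.1 ∧ H p.2 q.2 ∧ ¬ H p.1 q.2) ∨ (H q.1 p.1 ∧ H q.2 p.2 ∧ ¬ H q.2 p.1)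

/-- Arc relation of `H⁺` restricted to genuine vertices (pairs of distinct vertices). -/
def PairArcD (H : V → V → Prop) (p q : V × V) : Prop :=
  p.1 ≠ p.2 ∧ q.1 ≠ q.2 ∧ PairArc H p q

/-- Reachability in `H⁺`. -/
def PairReach (H : V → V → Prop) : V × V → V × V → Prop :=
  Relation.ReflTransGen (PairArcD H)

/-- Mutual reachability in `H⁺` (same strong component). -/
def SameSCC (H : V → V → Prop) (p q : V × V) : Prop :=
  PairReach H p q ∧ PairReach H q p

/-- `C` is a strong component of the digraph with arc relation `R`. -/
def IsStrongComponent {α : Type*} (R : α → α → Prop) (C : Set α) : Prop :=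
  ∃ a, C = {b | Relation.ReflTransGen R a b ∧ Relation.ReflTransGen R b a}

/-- There is a directed path with `m` vertices in the condensation of `H⁺`
ending at the strong component of `p`. -/
def CondChain (H : V → V → Prop) (p : V × V) (m : ℕ) : Prop :=
  ∃ r : Fin m → V × V,
    (∀ i, (r i).1 ≠ (r i).2) ∧
    (∀ i j : Fin m, i < j → PairReach H (r i) (r j) ∧ ¬ PairReach H (r j) (r i)) ∧
    (∀ i, PairReach H (r i) p) ∧
    (∀ h : 0 < m, PairReach H p (r ⟨m - 1, Nat.sub_lt h Nat.one_pos⟩))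

/-- `μ(p)`: the maximum number of vertices of a directed path in the condensation of `H⁺`
ending at the strong component of `p` (with `μ(x,x) = 0`). -/
noncomputable def mu (H : V → V → Prop) (p : V × V) : ℕ :=
  sSup {m | CondChain H p m}

/-- The unordered pair `{u, v}` is `k`-allowed with respect to the ordering `ord` of `V(H⁺)`:
neither `(u,v)` nor `(v,u)` is `k`-processed (i.e. has position `> k`). -/
def KAllowed (ord : V × V → ℕ) (k : ℕ) (u v : V) : Prop :=
  u = v ∨ (ord (u, v) ≤ k ∧ ord (v, u) ≤ k)

/-- `ord` is an ordering of the vertices of `H⁺` listing the strong components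
consecutively, in an order in which each component is a sink among the later ones. -/
def GoodOrd (H : V → V → Prop) (ord : V × V → ℕ) : Prop :=
  (∀ p q : V × V, p.1 ≠ p.2 → q.1 ≠ q.2 → ord p = ord q → p = q) ∧
  (∀ p q : V × V, p.1 ≠ p.2 → q.1 ≠ q.2 → PairReach H p q → ¬ PairReach H q p →
    ord p < ord q) ∧
  (∀ p q r : V × V, p.1 ≠ p.2 → q.1 ≠ q.2 → r.1 ≠ r.2 →
    SameSCC H p q → ord p ≤ ord r → ord r ≤ ord q → SameSCC H p r)

/-- `f` is an `L`-homomorphism of `G` to `H`. -/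
def IsLHom (H : V → V → Prop) (G : W → W → Prop) (L : W → Set V) (f : W → V) : Prop :=
  (∀ u v, G u v → H (f u) (f v)) ∧ ∀ w, f w ∈ L w

/-- Arc relation of the triple digraph `Tr(G,L)`. -/
def TrArc (H : V → V → Prop) (G : W → W → Prop) (L : W → Set V)
    (p q : W × V × V) : Prop :=
  p.2.1 ∈ L p.1 ∧ p.2.2 ∈ L p.1 ∧ q.2.1 ∈ L q.1 ∧ q.2.2 ∈ L q.1 ∧
  G p.1 q.1 ∧ H p.2.1 q.2.1 ∧ H p.2.2 q.2.2 ∧ ¬ H p.2.1 q.2.2 ∧ ¬ H p.2.2 q.2.1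

/-- Symmetrization of the triple-digraph arc relation (for weak connectivity). -/
def TrSym (H : V → V → Prop) (G : W → W → Prop) (L : W → Set V)
    (p q : W × V × V) : Prop :=
  TrArc H G L p q ∨ TrArc H G L q p

/-- Weak connectivity in the triple digraph `Tr(G,L)`. -/
def WConn (H : V → V → Prop) (G : W → W → Prop) (L : W → Set V) :
    W × V × V → W × V × V → Prop :=
  Relation.ReflTransGen (TrSym H G L)

/-- `f` is a ternary polymorphism of `H`. -/
def Polymorphism3 (H : V → V → Prop) (f : V → V → V → V) : Prop :=
  ∀ a a' b b' c c', H a a' → H b b' → H c c' → H (f a b c) (f a' b' c')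

/-- `f` is conservative. -/
def Conservative3 (f : V → V → V → V) : Prop :=
  ∀ a b c, f a b c = a ∨ f a b c = b ∨ f a b c = c

/-- `f 1, …, f k` satisfy the Hagemann–Mitschke identities. -/
def HMChain (f : ℕ → V → V → V → V) (k : ℕ) : Prop :=
  (∀ x y, f 1 x y y = x) ∧
  (∀ i, 1 ≤ i → i < k → ∀ x y, f i x x y = f (i + 1) x y y) ∧
  (∀ x y, f k x x y = y)

/-- `H` contains a pair of independent edges. -/
def IndependentEdges (H : V → V → Prop) : Prop :=
  ∃ a b c d, H a b ∧ H c d ∧ ¬ H a d ∧ ¬ H c b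

/-- `H` contains a bicycle. -/
def Bicycle (H : V → V → Prop) : Prop :=
  ∃ n : ℕ, 0 < n ∧ ∃ x y : Fin (n + 1) → V,
    x (Fin.last n) = x 0 ∧ y (Fin.last n) = y 0 ∧
    ∀ i : Fin n, H (x i.castSucc) (x i.succ) ∧ H (y i.castSucc) (y i.succ) ∧
      ¬ H (x i.castSucc) (y i.succ) ∧ H (y i.castSucc) (x i.succ)

/-- `a` is an `i`-distinguisher of `a, b, c`. -/
def IDist (H : V → V → Prop) (i : ℕ) (a b c : V) : Prop :=
  ∃ (n : ℕ) (d : Fin n → Bool) (X Y Z : Fin (n + 1) → V),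
    IsWalk H d X ∧ IsWalk H d Y ∧ IsWalk H d Z ∧
    X 0 = a ∧ Y 0 = b ∧ Z 0 = c ∧
    Y (Fin.last n) = Z (Fin.last n) ∧
    i ≤ mu H (X (Fin.last n), Y (Fin.last n)) ∧
    Avoids H d Y X ∧ Avoids H d Z X

/-- `Z` protects `Y` from `X` iff there is a subscript `s` splitting the walks. -/
theorem statement1 (H : V → V → Prop) {n : ℕ} (d : Fin n → Bool)
    (x y z : Fin (n + 1) → V)
    (hx : IsWalk H d x) (hy : IsWalk H d y) (hz : IsWalk H d z) :
    Protects H d x y z ↔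
      ∃ s : ℕ, s ≤ n ∧
        (∀ i : Fin n, (i : ℕ) < s → ¬ FaithfulAt H d x z i) ∧
        (∀ j : Fin n, s < (j : ℕ) → ¬ FaithfulAt H d z y j) := by
  classical
  constructor
  · intro hP
    by_cases hE : ∃ i : Fin n, FaithfulAt H d x z i
    · set S : Set ℕ := {m | ∃ hm : m < n, FaithfulAt H d x z ⟨m, hm⟩} with hS
      have hne : S.Nonempty := by
        obtain ⟨i, hi⟩ := hE
        exact ⟨(i : ℕ), ⟨i.isLt, by simpa using hi⟩⟩
      have hmem : sInf S ∈ S := Nat.sInf_mem hne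
      obtain ⟨hlt, hf⟩ := hmem
      refine ⟨sInf S, hlt.le, ?_, ?_⟩
      · intro i hi hfi
        have : (i : ℕ) ∈ S := ⟨i.isLt, by simpa using hfi⟩
        exact absurd (Nat.sInf_le this) (not_le.mpr hi)
      · intro j hj hfj
        have h' : (j : ℕ) ≤ sInf S := hP ⟨sInf S, hlt⟩ j hf hfj
        omega
    · refine ⟨n, le_rfl, ?_, ?_⟩
      · intro i _ hfi
        exact hE ⟨i, hfi⟩
      · intro j hj _
        exact absurd j.isLt (not_lt.mpr hj.le)
  · rintro ⟨s, _, h1, h2⟩ i j hfi hfj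
    by_contra h
    have hij : (i : ℕ) < (j : ℕ) := not_le.mp h
    have hsi : s ≤ (i : ℕ) := not_lt.mp fun hlt => h1 i hlt hfi
    exact h2 j (lt_of_le_of_lt hsi hij) hfj

end DigraphListHom
end

section
/- If a digraph H contains an extended N with walks X, Y, Z such that Y also avoids X, then H contains a circular N. -/
namespace DigraphListHom

variable {V W : Type*}

private lemma step_rev {H : V → V → Prop} {u v : V} {b : Bool} :
    Step H u v (!b) ↔ Step H v u b := by
  cases b <;> simp [Step]

/-- an extended `N` in which `Y` also avoids `X` yields a circular `N`. -/
theorem statement2 (H : V → V → Prop) {n : ℕ} (hn : 0 < n) (d : Fin n → Bool)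
    (x y z : Fin (n + 1) → V)
    (hx : IsWalk H d x) (hy : IsWalk H d y) (hz : IsWalk H d z)
    (hz0 : z 0 = y 0) (hzn : z (Fin.last n) = x (Fin.last n))
    (hXY : Avoids H d x y) (hprot : Protects H d x y z)
    (hYX : Avoids H d y x) :
    CircularN H := by
  classical
  -- nat-level copies of the data
  let xf : ℕ → V := fun k => if h : k < n + 1 then x ⟨k, h⟩ else x 0
  let yf : ℕ → V := fun k => if h : k < n + 1 then y ⟨k, h⟩ else y 0
  let zf : ℕ → V := fun k => if h : k < n + 1 then z ⟨k, h⟩ else z 0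
  let df : ℕ → Bool := fun k => if h : k < n then d ⟨k, h⟩ else true
  have hxf : ∀ k (h : k < n + 1), xf k = x ⟨k, h⟩ := fun k h => dif_pos h
  have hyf : ∀ k (h : k < n + 1), yf k = y ⟨k, h⟩ := fun k h => dif_pos h
  have hzf : ∀ k (h : k < n + 1), zf k = z ⟨k, h⟩ := fun k h => dif_pos h
  have hdf : ∀ k (h : k < n), df k = d ⟨k, h⟩ := fun k h => dif_pos h
  have hxw : ∀ k, k < n → Step H (xf k) (xf (k + 1)) (df k) := by
    intro k hk
    rw [hxf k (by omega), hxf (k + 1) (by omega), hdf k hk]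
    exact hx ⟨k, hk⟩
  have hyw : ∀ k, k < n → Step H (yf k) (yf (k + 1)) (df k) := by
    intro k hk
    rw [hyf k (by omega), hyf (k + 1) (by omega), hdf k hk]
    exact hy ⟨k, hk⟩
  have hzw : ∀ k, k < n → Step H (zf k) (zf (k + 1)) (df k) := by
    intro k hk
    rw [hzf k (by omega), hzf (k + 1) (by omega), hdf k hk]
    exact hz ⟨k, hk⟩
  have hXY' : ∀ k, k < n → ¬ Step H (xf k) (yf (k + 1)) (df k) := by
    intro k hk
    rw [hxf k (by omega), hyf (k + 1) (by omega), hdf k hk]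
    exact hXY ⟨k, hk⟩
  have hYX' : ∀ k, k < n → ¬ Step H (yf k) (xf (k + 1)) (df k) := by
    intro k hk
    rw [hyf k (by omega), hxf (k + 1) (by omega), hdf k hk]
    exact hYX ⟨k, hk⟩
  have hprot' : ∀ a b, a < n → b < n → Step H (xf a) (zf (a + 1)) (df a) →
      Step H (zf b) (yf (b + 1)) (df b) → b ≤ a := by
    intro a b ha hb h1 h2
    rw [hxf a (by omega), hzf (a + 1) (by omega), hdf a ha] at h1
    rw [hzf b (by omega), hyf (b + 1) (by omega), hdf b hb] at h2
    exact hprot ⟨a, ha⟩ ⟨b, hb⟩ h1 h2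
  have hz0' : zf 0 = yf 0 := by
    rw [hzf 0 (by omega), hyf 0 (by omega)]
    simpa using hz0
  have hzn' : zf n = xf n := by
    rw [hzf n (by omega), hxf n (by omega)]
    exact hzn
  -- the doubled walks
  let X : ℕ → V := fun k => if k ≤ n then xf k else xf (n + n - k)
  let Y : ℕ → V := fun k => if k ≤ n then yf k else yf (n + n - k)
  let Z : ℕ → V := fun k => if k ≤ n then zf k else xf (n + n - k)
  let D : ℕ → Bool := fun k => if k < n then df k else !df (n + n - 1 - k)
  have hXlow : ∀ k, k ≤ n → X k = xf k := fun k h => if_pos h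
  have hYlow : ∀ k, k ≤ n → Y k = yf k := fun k h => if_pos h
  have hZlow : ∀ k, k ≤ n → Z k = zf k := fun k h => if_pos h
  have hXhigh : ∀ k, n ≤ k → X k = xf (n + n - k) := by
    intro k h
    rcases eq_or_lt_of_le h with rfl | h'
    · rw [hXlow n le_rfl]; congr 1; omega
    · exact if_neg (by omega)
  have hYhigh : ∀ k, n ≤ k → Y k = yf (n + n - k) := by
    intro k h
    rcases eq_or_lt_of_le h with rfl | h'
    · rw [hYlow n le_rfl]; congr 1; omega
    · exact if_neg (by omega)
  have hZhigh : ∀ k, n ≤ k → Z k = xf (n + n - k) := by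
    intro k h
    rcases eq_or_lt_of_le h with rfl | h'
    · rw [hZlow n le_rfl, hzn']; congr 1; omega
    · exact if_neg (by omega)
  have hDlow : ∀ k, k < n → D k = df k := fun k h => if_pos h
  have hDhigh : ∀ k, n ≤ k → D k = !df (n + n - 1 - k) := fun k h => if_neg (by omega)
  refine ⟨n + n, by omega, fun i => D (i : ℕ), fun i => X (i : ℕ), fun i => Y (i : ℕ),
    fun i => Z (i : ℕ), ?_, ?_, ?_, ?_, ?_, ?_, ?_, ?_, ?_⟩
  · intro i
    show Step H (X (i.castSucc : ℕ)) (X (i.succ : ℕ)) (D (i : ℕ))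
    rw [Fin.coe_castSucc, Fin.val_succ]
    have hk : (i : ℕ) < n + n := i.isLt
    by_cases hk' : (i : ℕ) < n
    · rw [hXlow _ (by omega), hXlow _ (by omega), hDlow _ hk']
      exact hxw _ hk'
    · rw [hXhigh _ (by omega), hXhigh _ (by omega), hDhigh _ (by omega), step_rev]
      have h1 : n + n - ((i : ℕ) + 1) = n + n - 1 - (i : ℕ) := by omega
      have h2 : n + n - (i : ℕ) = (n + n - 1 - (i : ℕ)) + 1 := by omega
      rw [h1, h2]
      exact hxw _ (by omega)
  · intro i
    show Step H (Y (i.castSucc : ℕ)) (Y (i.succ : ℕ)) (D (i : ℕ))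
    rw [Fin.coe_castSucc, Fin.val_succ]
    have hk : (i : ℕ) < n + n := i.isLt
    by_cases hk' : (i : ℕ) < n
    · rw [hYlow _ (by omega), hYlow _ (by omega), hDlow _ hk']
      exact hyw _ hk'
    · rw [hYhigh _ (by omega), hYhigh _ (by omega), hDhigh _ (by omega), step_rev]
      have h1 : n + n - ((i : ℕ) + 1) = n + n - 1 - (i : ℕ) := by omega
      have h2 : n + n - (i : ℕ) = (n + n - 1 - (i : ℕ)) + 1 := by omega
      rw [h1, h2]
      exact hyw _ (by omega)
  · intro i
    show Step H (Z (i.castSucc : ℕ)) (Z (i.succ : ℕ)) (D (i : ℕ))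
    rw [Fin.coe_castSucc, Fin.val_succ]
    have hk : (i : ℕ) < n + n := i.isLt
    by_cases hk' : (i : ℕ) < n
    · rw [hZlow _ (by omega), hZlow _ (by omega), hDlow _ hk']
      exact hzw _ hk'
    · rw [hZhigh _ (by omega), hZhigh _ (by omega), hDhigh _ (by omega), step_rev]
      have h1 : n + n - ((i : ℕ) + 1) = n + n - 1 - (i : ℕ) := by omega
      have h2 : n + n - (i : ℕ) = (n + n - 1 - (i : ℕ)) + 1 := by omega
      rw [h1, h2]
      exact hxw _ (by omega)
  · show X ((Fin.last (n + n) : Fin (n + n + 1)) : ℕ) = X ((0 : Fin (n + n + 1)) : ℕ)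
    rw [Fin.val_last, Fin.val_zero, hXhigh _ (by omega), hXlow _ (by omega)]
    congr 1; omega
  · show Y ((Fin.last (n + n) : Fin (n + n + 1)) : ℕ) = Y ((0 : Fin (n + n + 1)) : ℕ)
    rw [Fin.val_last, Fin.val_zero, hYhigh _ (by omega), hYlow _ (by omega)]
    congr 1; omega
  · show Z ((0 : Fin (n + n + 1)) : ℕ) = Y ((0 : Fin (n + n + 1)) : ℕ)
    rw [Fin.val_zero, hZlow _ (by omega), hYlow _ (by omega)]
    exact hz0'
  · show Z ((Fin.last (n + n) : Fin (n + n + 1)) : ℕ) = X ((0 : Fin (n + n + 1)) : ℕ)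
    rw [Fin.val_last, Fin.val_zero, hZhigh _ (by omega), hXlow _ (by omega)]
    congr 1; omega
  · intro i hF
    have hk : (i : ℕ) < n + n := i.isLt
    have hF' : Step H (X (i : ℕ)) (Y ((i : ℕ) + 1)) (D (i : ℕ)) := by
      have : Step H (X (i.castSucc : ℕ)) (Y (i.succ : ℕ)) (D (i : ℕ)) := hF
      rwa [Fin.coe_castSucc, Fin.val_succ] at this
    by_cases hk' : (i : ℕ) < n
    · rw [hXlow _ (by omega), hYlow _ (by omega), hDlow _ hk'] at hF'
      exact hXY' _ hk' hF'
    · rw [hXhigh _ (by omega), hYhigh _ (by omega), hDhigh _ (by omega), step_rev] at hF'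
      have h1 : n + n - ((i : ℕ) + 1) = n + n - 1 - (i : ℕ) := by omega
      have h2 : n + n - (i : ℕ) = (n + n - 1 - (i : ℕ)) + 1 := by omega
      rw [h1, h2] at hF'
      exact hYX' _ (by omega) hF'
  · intro i j hFi hFj
    have hki : (i : ℕ) < n + n := i.isLt
    have hkj : (j : ℕ) < n + n := j.isLt
    have hFi' : Step H (X (i : ℕ)) (Z ((i : ℕ) + 1)) (D (i : ℕ)) := by
      have : Step H (X (i.castSucc : ℕ)) (Z (i.succ : ℕ)) (D (i : ℕ)) := hFi
      rwa [Fin.coe_castSucc, Fin.val_succ] at this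
    have hFj' : Step H (Z (j : ℕ)) (Y ((j : ℕ) + 1)) (D (j : ℕ)) := by
      have : Step H (Z (j.castSucc : ℕ)) (Y (j.succ : ℕ)) (D (j : ℕ)) := hFj
      rwa [Fin.coe_castSucc, Fin.val_succ] at this
    have hjn : (j : ℕ) < n := by
      by_contra hjn
      rw [hZhigh _ (by omega), hYhigh _ (by omega), hDhigh _ (by omega), step_rev] at hFj'
      have h1 : n + n - ((j : ℕ) + 1) = n + n - 1 - (j : ℕ) := by omega
      have h2 : n + n - (j : ℕ) = (n + n - 1 - (j : ℕ)) + 1 := by omega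
      rw [h1, h2] at hFj'
      exact hYX' _ (by omega) hFj'
    show (j : ℕ) ≤ (i : ℕ)
    by_cases hin : (i : ℕ) < n
    · rw [hXlow _ (by omega), hZlow _ (by omega), hDlow _ hin] at hFi'
      rw [hZlow _ (by omega), hYlow _ (by omega), hDlow _ hjn] at hFj'
      exact hprot' _ _ hin hjn hFi' hFj'
    · omega

end DigraphListHom
end

section
/- Let H be a digraph containing no circular N, and let H⁺ be its pair digraph. If C is a directed cycle in H⁺, then all arcs of C are double (i.e., for each arc (x,y)(x',y') of C, the reversed arc (x',y')(x,y) is also present in H⁺). -/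
namespace DigraphListHom

variable {V W : Type*}

private lemma mod_succ_eq {n : ℕ} (hn : 0 < n) (m : ℕ) :
    (m + 1) % n = if m % n + 1 = n then 0 else m % n + 1 := by
  have h1 : (m + 1) % n = (m % n + 1) % n := by
    conv_lhs => rw [← Nat.mod_add_div m n]
    rw [Nat.add_right_comm, Nat.add_mul_mod_self_left]
  rw [h1]
  split
  · next h => rw [h, Nat.mod_self]
  · next h =>
      exact Nat.mod_eq_of_lt (by have := Nat.mod_lt m hn; omega)

private lemma step_true {H : V → V → Prop} {u v : V} : Step H u v true ↔ H u v := by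
  simp [Step]

private lemma step_false {H : V → V → Prop} {u v : V} : Step H u v false ↔ H v u := by
  simp [Step]

/-- if `H` has no circular `N`, all arcs of a directed cycle of `H⁺` are double. -/
theorem statement3 (H : V → V → Prop) (hH : ¬ CircularN H) {n : ℕ} (hn : 0 < n)
    (c : Fin (n + 1) → V × V) (hclosed : c (Fin.last n) = c 0)
    (harc : ∀ i : Fin n, PairArcD H (c i.castSucc) (c i.succ)) :
    ∀ i : Fin n, PairArcD H (c i.succ) (c i.castSucc) := by
  intro i
  refine ⟨(harc i).2.1, (harc i).1, ?_⟩
  by_contra hbad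
  apply hH
  classical
  set s : ℕ := (i : ℕ) + 1 with hs
  set C : ℕ → V × V := fun m => c ⟨m % n, Nat.lt_succ_of_lt (Nat.mod_lt m hn)⟩ with hC
  have key : ∀ (a b : Fin (n + 1)), (a : ℕ) = (b : ℕ) → c a = c b := fun a b h =>
    congrArg c (Fin.ext h)
  have hCper : ∀ m, C (m + n) = C m := by
    intro m
    simp only [hC]
    exact key _ _ (by simp [Nat.add_mod_right])
  have hsucc : ∀ m, C (m + 1) = c (Fin.succ ⟨m % n, Nat.mod_lt m hn⟩) := by
    intro m
    simp only [hC]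
    by_cases h : m % n + 1 < n
    · have hv : (m + 1) % n = m % n + 1 := by
        rw [mod_succ_eq hn, if_neg (Nat.ne_of_lt h)]
      exact key _ _ (by simp only [Fin.val_succ]; exact hv)
    · have hm : m % n + 1 = n := by have := Nat.mod_lt m hn; omega
      have h2 : Fin.succ (⟨m % n, Nat.mod_lt m hn⟩ : Fin n) = Fin.last n :=
        Fin.ext (by simp [hm])
      have hv : (m + 1) % n = 0 := by rw [mod_succ_eq hn, if_pos hm]
      rw [h2, hclosed]
      exact key _ _ (by simp only [Fin.val_zero]; exact hv)
  have hcs : ∀ m, C m = c (Fin.castSucc ⟨m % n, Nat.mod_lt m hn⟩) := by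
    intro m
    simp only [hC]
    exact key _ _ (by simp)
  have harcC : ∀ m, PairArc H (C m) (C (m + 1)) := by
    intro m
    rw [hcs m, hsucc m]
    exact (harc _).2.2
  have hii : (⟨(i : ℕ) % n, Nat.mod_lt (i : ℕ) hn⟩ : Fin n) = i :=
    Fin.ext (Nat.mod_eq_of_lt i.isLt)
  have hbadC : ¬ PairArc H (C ((i : ℕ) + 1)) (C (i : ℕ)) := by
    rw [hcs (i : ℕ), hsucc (i : ℕ), hii]
    exact hbad
  set Fwd : ℕ → Prop := fun m =>
    H (C m).1 (C (m + 1)).1 ∧ H (C m).2 (C (m + 1)).2 ∧ ¬ H (C m).1 (C (m + 1)).2 with hFwd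
  set d : ℕ → Bool := fun m => if Fwd m then true else false with hd
  have hdt : ∀ m, Fwd m → d m = true := fun m h => by simp only [hd]; exact if_pos h
  have hdf : ∀ m, ¬ Fwd m → d m = false := fun m h => by simp only [hd]; exact if_neg h
  have hBwd : ∀ m, ¬ Fwd m →
      H (C (m + 1)).1 (C m).1 ∧ H (C (m + 1)).2 (C m).2 ∧ ¬ H (C (m + 1)).2 (C m).1 := by
    intro m h
    rcases harcC m with h1 | h1
    · exact absurd h1 h
    · exact h1
  have hstepA : ∀ m, Step H (C m).1 (C (m + 1)).1 (d m) ∧ Step H (C m).2 (C (m + 1)).2 (d m)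
      ∧ ¬ Step H (C m).1 (C (m + 1)).2 (d m) := by
    intro m
    by_cases hf : Fwd m
    · rw [hdt m hf]
      exact ⟨step_true.2 hf.1, step_true.2 hf.2.1, fun hx => hf.2.2 (step_true.1 hx)⟩
    · rw [hdf m hf]
      obtain ⟨h1, h2, h3⟩ := hBwd m hf
      exact ⟨step_false.2 h1, step_false.2 h2, fun hx => h3 (step_false.1 hx)⟩
  have hZ : Step H (C ((i : ℕ) + n)).2 (C ((i : ℕ) + n + 1)).1 (d ((i : ℕ) + n)) := by
    have e1 : C ((i : ℕ) + n) = C (i : ℕ) := hCper _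
    have e2 : C ((i : ℕ) + n + 1) = C ((i : ℕ) + 1) := by
      have h : (i : ℕ) + n + 1 = (i : ℕ) + 1 + n := by omega
      rw [h]; exact hCper _
    by_cases hf : Fwd ((i : ℕ) + n)
    · obtain ⟨f1, f2, -⟩ := id hf
      rw [e1, e2] at f1 f2
      rw [hdt _ hf, e1, e2, step_true]
      by_contra hx
      exact hbadC (Or.inr ⟨f1, f2, hx⟩)
    · obtain ⟨b1, b2, _⟩ := hBwd _ hf
      rw [e1, e2] at b1 b2
      rw [hdf _ hf, e1, e2, step_false]
      by_contra hx
      exact hbadC (Or.inl ⟨b1, b2, hx⟩)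
  refine ⟨n, hn, fun j => d (s + (j : ℕ)), fun j => (C (s + (j : ℕ))).1,
    fun j => (C (s + (j : ℕ))).2,
    fun j => if (j : ℕ) < n then (C (s + (j : ℕ))).2 else (C (s + (j : ℕ))).1,
    ?_, ?_, ?_, ?_, ?_, ?_, ?_, ?_, ?_⟩
  · intro j
    simp only [Fin.coe_castSucc, Fin.val_succ]
    have e : s + ((j : ℕ) + 1) = s + (j : ℕ) + 1 := by omega
    rw [e]
    exact (hstepA _).1
  · intro j
    simp only [Fin.coe_castSucc, Fin.val_succ]
    have e : s + ((j : ℕ) + 1) = s + (j : ℕ) + 1 := by omega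
    rw [e]
    exact (hstepA _).2.1
  · intro j
    simp only [Fin.coe_castSucc, Fin.val_succ]
    rw [if_pos j.isLt]
    by_cases h : (j : ℕ) + 1 < n
    · rw [if_pos h]
      have e : s + ((j : ℕ) + 1) = s + (j : ℕ) + 1 := by omega
      rw [e]
      exact (hstepA _).2.1
    · rw [if_neg h]
      have e1 : s + ((j : ℕ) + 1) = (i : ℕ) + n + 1 := by have := j.isLt; omega
      have e2 : s + (j : ℕ) = (i : ℕ) + n := by have := j.isLt; omega
      rw [e1, e2]
      exact hZ
  · simp only [Fin.val_last, Fin.val_zero, Nat.add_zero]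
    rw [hCper s]
  · simp only [Fin.val_last, Fin.val_zero, Nat.add_zero]
    rw [hCper s]
  · simp only [Fin.val_zero, Nat.add_zero]
    exact if_pos hn
  · simp only [Fin.val_last, Fin.val_zero, Nat.add_zero]
    rw [if_neg (lt_irrefl n), hCper s]
  · intro j hfa
    simp only [FaithfulAt, Fin.coe_castSucc, Fin.val_succ] at hfa
    have e : s + ((j : ℕ) + 1) = s + (j : ℕ) + 1 := by omega
    rw [e] at hfa
    exact (hstepA _).2.2 hfa
  · intro a b h1 _h2
    by_cases h : (a : ℕ) + 1 < n
    · exfalso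
      simp only [FaithfulAt, Fin.coe_castSucc, Fin.val_succ] at h1
      rw [if_pos h] at h1
      have e : s + ((a : ℕ) + 1) = s + (a : ℕ) + 1 := by omega
      rw [e] at h1
      exact (hstepA _).2.2 h1
    · have := b.isLt; have := a.isLt; omega

end DigraphListHom
end

section
/- Let H be a digraph with no circular N, and fix an ordering p₁,…,p_m of V(H⁺) listing the strong components C₁,…,C_t in an order where each Cᵢ has no arcs to C_j with j < i. Suppose P = a,a₁,…,a', Q = b,b₁,…,b', R = b,c₁,…,c' are three congruent walks in H such that for every subscript i, the unordered pair {bᵢ,cᵢ} is k-allowed. If P and Q avoid each other, then P and R avoid each other. -/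
namespace DigraphListHom

variable {V W : Type*}

section AuxCircN

variable {H : V → V → Prop}

lemma step_not {u v : V} {e : Bool} : Step H u v (!e) ↔ Step H v u e := by
  cases e <;> simp [Step]

lemma step_of_pairArcD {p q : V × V} (h : PairArcD H p q) :
    ∃ e : Bool, Step H p.1 q.1 e ∧ Step H p.2 q.2 e ∧ ¬ Step H p.1 q.2 e := by
  rcases h.2.2 with ⟨h1, h2, h3⟩ | ⟨h1, h2, h3⟩
  · exact ⟨true, by simpa [Step] using h1, by simpa [Step] using h2, by simpa [Step] using h3⟩
  · exact ⟨false, by simpa [Step] using h1, by simpa [Step] using h2, by simpa [Step] using h3⟩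

lemma pairArcD_of {u1 u2 v1 v2 : V} (h1 : u1 ≠ u2) (h2 : v1 ≠ v2) (e : Bool)
    (s1 : Step H u1 v1 e) (s2 : Step H u2 v2 e) (na : ¬ Step H u1 v2 e) :
    PairArcD H (u1, u2) (v1, v2) := by
  refine ⟨h1, h2, ?_⟩
  cases e
  · exact Or.inr ⟨by simpa [Step] using s1, by simpa [Step] using s2, by simpa [Step] using na⟩
  · exact Or.inl ⟨by simpa [Step] using s1, by simpa [Step] using s2, by simpa [Step] using na⟩

lemma reach_to_seq {p q : V × V} (h : PairReach H p q) :
    ∃ (m : ℕ) (w : ℕ → V × V) (e : ℕ → Bool),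
      w 0 = p ∧ w m = q ∧
      ∀ j, j < m → Step H (w j).1 (w (j+1)).1 (e j) ∧ Step H (w j).2 (w (j+1)).2 (e j) ∧
        ¬ Step H (w j).1 (w (j+1)).2 (e j) := by
  have h' : Relation.ReflTransGen (PairArcD H) p q := h
  clear h
  induction h' with
  | refl => exact ⟨0, fun _ => p, fun _ => true, rfl, rfl, by omega⟩
  | @tail b c hr harc ih =>
    obtain ⟨m, w, e, hw0, hwm, hstep⟩ := ih
    obtain ⟨e', s1, s2, s3⟩ := step_of_pairArcD harc
    refine ⟨m+1, fun j => if j ≤ m then w j else c, fun j => if j < m then e j else e',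
      by simp [hw0], by simp, ?_⟩
    intro j hj
    rcases Nat.lt_or_ge j m with hjm | hjm
    · simp only [if_pos (by omega : j ≤ m), if_pos (by omega : j + 1 ≤ m), if_pos hjm]
      exact hstep j hjm
    · have hjm' : j = m := by omega
      subst hjm'
      simp only [if_pos le_rfl, if_neg (by omega : ¬ (j+1 ≤ j)), if_neg (lt_irrefl j)]
      rw [hwm]
      exact ⟨s1, s2, s3⟩

lemma circularN_of (H : V → V → Prop) (N : ℕ) (hN : 0 < N)
    (dir : ℕ → Bool) (x y z : ℕ → V)
    (hx : ∀ j, j < N → Step H (x j) (x (j+1)) (dir j))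
    (hy : ∀ j, j < N → Step H (y j) (y (j+1)) (dir j))
    (hz : ∀ j, j < N → Step H (z j) (z (j+1)) (dir j))
    (hxN : x N = x 0) (hyN : y N = y 0) (hz0 : z 0 = y 0) (hzN : z N = x 0)
    (hav : ∀ j, j < N → ¬ Step H (x j) (y (j+1)) (dir j))
    (hpr : ∀ i j, i < N → j < N → Step H (x i) (z (i+1)) (dir i) →
      Step H (z j) (y (j+1)) (dir j) → j ≤ i) :
    CircularN H := by
  refine ⟨N, hN, fun i => dir i.1, fun i => x i.1, fun i => y i.1, fun i => z i.1,
    ?_, ?_, ?_, ?_, ?_, ?_, ?_, ?_, ?_⟩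
  · intro i
    simpa [Fin.coe_castSucc, Fin.val_succ] using hx i.1 i.2
  · intro i
    simpa [Fin.coe_castSucc, Fin.val_succ] using hy i.1 i.2
  · intro i
    simpa [Fin.coe_castSucc, Fin.val_succ] using hz i.1 i.2
  · simpa [Fin.val_last] using hxN
  · simpa [Fin.val_last] using hyN
  · simpa using hz0
  · simpa [Fin.val_last] using hzN
  · intro i hf
    exact hav i.1 i.2 (by simpa [FaithfulAt, Fin.coe_castSucc, Fin.val_succ] using hf)
  · intro i j f1 f2
    exact hpr i.1 j.1 i.2 j.2
      (by simpa [FaithfulAt, Fin.coe_castSucc, Fin.val_succ] using f1)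
      (by simpa [FaithfulAt, Fin.coe_castSucc, Fin.val_succ] using f2)

lemma circularN_construct (H : V → V → Prop) (L I : ℕ) (hL : 0 < L) (hI : I < L)
    (dir0 : ℕ → Bool) (X0 Y0 Z0 : ℕ → V)
    (hX : ∀ j, j < L → Step H (X0 j) (X0 (j+1)) (dir0 j))
    (hY : ∀ j, j < L → Step H (Y0 j) (Y0 (j+1)) (dir0 j))
    (hZ : ∀ j, j < L → Step H (Z0 j) (Z0 (j+1)) (dir0 j))
    (hav : ∀ j, j < L → ¬ Step H (X0 j) (Y0 (j+1)) (dir0 j))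
    (hZL : Z0 L = X0 L) (hz0 : Z0 0 = Y0 0)
    (hXZ : ∀ j, j < L → Step H (X0 j) (Z0 (j+1)) (dir0 j) → I ≤ j)
    (hZY : ∀ j, j < L → Step H (Z0 j) (Y0 (j+1)) (dir0 j) → j ≤ I)
    (hreach : PairReach H (X0 L, Y0 L) (X0 0, Y0 0)) :
    CircularN H := by
  classical
  obtain ⟨m, w, e, hw0, hwm, hws⟩ := reach_to_seq hreach
  have hw01 : (w 0).1 = X0 L := by rw [hw0]
  have hw02 : (w 0).2 = Y0 L := by rw [hw0]
  have hwm1 : (w m).1 = X0 0 := by rw [hwm]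
  have hwm2 : (w m).2 = Y0 0 := by rw [hwm]
  set X : ℕ → V := fun j => if j < L then X0 j else (w (j - L)).1 with hXdef
  set Y : ℕ → V := fun j => if j < L then Y0 j else (w (j - L)).2 with hYdef
  set Z : ℕ → V := fun j => if j < L then Z0 j else (w (j - L)).1 with hZdef
  set dir : ℕ → Bool := fun j => if j < L then dir0 j else e (j - L) with hdirdef
  have hXle : ∀ j, j ≤ L → X j = X0 j := by
    intro j hj
    rcases Nat.lt_or_ge j L with h | h
    · simp [hXdef, h]
    · have hj' : j = L := by omega
      subst hj'
      simp [hXdef, hw01]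
  have hYle : ∀ j, j ≤ L → Y j = Y0 j := by
    intro j hj
    rcases Nat.lt_or_ge j L with h | h
    · simp [hYdef, h]
    · have hj' : j = L := by omega
      subst hj'
      simp [hYdef, hw02]
  have hZle : ∀ j, j ≤ L → Z j = Z0 j := by
    intro j hj
    rcases Nat.lt_or_ge j L with h | h
    · simp [hZdef, h]
    · have hj' : j = L := by omega
      subst hj'
      simp [hZdef, hw01, hZL]
  have hXs : ∀ s, X (L + s) = (w s).1 := by
    intro s
    have h1 : ¬ (L + s < L) := by omega
    have h2 : L + s - L = s := by omega
    simp [hXdef, h1, h2]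
  have hYs : ∀ s, Y (L + s) = (w s).2 := by
    intro s
    have h1 : ¬ (L + s < L) := by omega
    have h2 : L + s - L = s := by omega
    simp [hYdef, h1, h2]
  have hZs : ∀ s, Z (L + s) = (w s).1 := by
    intro s
    have h1 : ¬ (L + s < L) := by omega
    have h2 : L + s - L = s := by omega
    simp [hZdef, h1, h2]
  have hdirle : ∀ j, j < L → dir j = dir0 j := by
    intro j hj; simp [hdirdef, hj]
  have hdirs : ∀ s, dir (L + s) = e s := by
    intro s
    have h1 : ¬ (L + s < L) := by omega
    have h2 : L + s - L = s := by omega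
    simp [hdirdef, h1, h2]
  have hXw : ∀ j, j < L + m → Step H (X j) (X (j+1)) (dir j) := by
    intro j hj
    rcases Nat.lt_or_ge j L with h | h
    · rw [hdirle j h, hXle j (by omega), hXle (j+1) (by omega)]
      exact hX j h
    · obtain ⟨s, rfl⟩ : ∃ s, j = L + s := ⟨j - L, by omega⟩
      rw [hdirs s, hXs s, show L + s + 1 = L + (s+1) from rfl, hXs (s+1)]
      exact (hws s (by omega)).1
  have hYw : ∀ j, j < L + m → Step H (Y j) (Y (j+1)) (dir j) := by
    intro j hj
    rcases Nat.lt_or_ge j L with h | h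
    · rw [hdirle j h, hYle j (by omega), hYle (j+1) (by omega)]
      exact hY j h
    · obtain ⟨s, rfl⟩ : ∃ s, j = L + s := ⟨j - L, by omega⟩
      rw [hdirs s, hYs s, show L + s + 1 = L + (s+1) from rfl, hYs (s+1)]
      exact (hws s (by omega)).2.1
  have hZw : ∀ j, j < L + m → Step H (Z j) (Z (j+1)) (dir j) := by
    intro j hj
    rcases Nat.lt_or_ge j L with h | h
    · rw [hdirle j h, hZle j (by omega), hZle (j+1) (by omega)]
      exact hZ j h
    · obtain ⟨s, rfl⟩ : ∃ s, j = L + s := ⟨j - L, by omega⟩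
      rw [hdirs s, hZs s, show L + s + 1 = L + (s+1) from rfl, hZs (s+1)]
      exact (hws s (by omega)).1
  have havXY : ∀ j, j < L + m → ¬ Step H (X j) (Y (j+1)) (dir j) := by
    intro j hj
    rcases Nat.lt_or_ge j L with h | h
    · rw [hdirle j h, hXle j (by omega), hYle (j+1) (by omega)]
      exact hav j h
    · obtain ⟨s, rfl⟩ : ∃ s, j = L + s := ⟨j - L, by omega⟩
      rw [hdirs s, hXs s, show L + s + 1 = L + (s+1) from rfl, hYs (s+1)]
      exact (hws s (by omega)).2.2
  refine circularN_of H (L + m) (by omega) dir X Y Z hXw hYw hZw ?_ ?_ ?_ ?_ havXY ?_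
  · rw [hXs m, hwm1, hXle 0 (by omega)]
  · rw [hYs m, hwm2, hYle 0 (by omega)]
  · rw [hZle 0 (by omega), hYle 0 (by omega)]; exact hz0
  · rw [hZs m, hwm1, hXle 0 (by omega)]
  · intro i j hi hj f1 f2
    have hIle : I ≤ i := by
      rcases Nat.lt_or_ge i L with h | h
      · refine hXZ i h ?_
        rw [hdirle i h, hXle i (by omega), hZle (i+1) (by omega)] at f1
        exact f1
      · omega
    have hjle : j ≤ I := by
      rcases Nat.lt_or_ge j L with h | h
      · refine hZY j h ?_
        rw [hdirle j h, hZle j (by omega), hYle (j+1) (by omega)] at f2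
        exact f2
      · exfalso
        obtain ⟨s, rfl⟩ : ∃ s, j = L + s := ⟨j - L, by omega⟩
        rw [hdirs s, hZs s, show L + s + 1 = L + (s+1) from rfl, hYs (s+1)] at f2
        exact (hws s (by omega)).2.2 f2
    omega

def nseq {n : ℕ} (x : Fin (n+1) → V) : ℕ → V :=
  fun j => x ⟨min j n, Nat.lt_succ_of_le (Nat.min_le_right j n)⟩

def ndir {n : ℕ} (d : Fin n → Bool) : ℕ → Bool :=
  fun j => if h : j < n then d ⟨j, h⟩ else true

lemma nseq_eq {n : ℕ} (x : Fin (n+1) → V) {j : ℕ} (h : j < n + 1) :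
    nseq x j = x ⟨j, h⟩ := by
  unfold nseq
  congr 1
  exact Fin.ext (Nat.min_eq_left (by omega))

lemma step_nseq_iff {n : ℕ} (H : V → V → Prop) (d : Fin n → Bool) (x y : Fin (n+1) → V)
    {j : ℕ} (hj : j < n) :
    Step H (nseq x j) (nseq y (j+1)) (ndir d j) ↔ FaithfulAt H d x y ⟨j, hj⟩ := by
  have h1 : nseq x j = x (Fin.castSucc ⟨j, hj⟩) := nseq_eq x (by omega)
  have h2 : nseq y (j+1) = y (Fin.succ ⟨j, hj⟩) := nseq_eq y (by omega)
  have h3 : ndir d j = d ⟨j, hj⟩ := dif_pos hj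
  rw [h1, h2, h3]
  exact Iff.rfl

end AuxCircN

/-- Lemma 4.1 ("Lemma new"). -/
theorem statement5 (H : V → V → Prop) (hH : ¬ CircularN H)
    (ord : V × V → ℕ) (hord : GoodOrd H ord)
    (k : ℕ) (a b : V) (hab : a ≠ b) (hk : ord (a, b) = k)
    {n : ℕ} (d : Fin n → Bool) (P Q R : Fin (n + 1) → V)
    (hP : IsWalk H d P) (hQ : IsWalk H d Q) (hR : IsWalk H d R)
    (hP0 : P 0 = a) (hQ0 : Q 0 = b) (hR0 : R 0 = b)
    (hallow : ∀ i, KAllowed ord k (Q i) (R i))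
    (hPQ : Avoids H d P Q) (hQP : Avoids H d Q P) :
    Avoids H d P R ∧ Avoids H d R P := by
  classical
  rcases Nat.eq_zero_or_pos n with hn0 | hn
  · subst hn0
    exact ⟨fun i => i.elim0, fun i => i.elim0⟩
  have hPs : ∀ j, ∀ hj : j < n, Step H (nseq P j) (nseq P (j+1)) (ndir d j) :=
    fun j hj => (step_nseq_iff H d P P hj).mpr (hP ⟨j, hj⟩)
  have hQs : ∀ j, ∀ hj : j < n, Step H (nseq Q j) (nseq Q (j+1)) (ndir d j) :=
    fun j hj => (step_nseq_iff H d Q Q hj).mpr (hQ ⟨j, hj⟩)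
  have hRs : ∀ j, ∀ hj : j < n, Step H (nseq R j) (nseq R (j+1)) (ndir d j) :=
    fun j hj => (step_nseq_iff H d R R hj).mpr (hR ⟨j, hj⟩)
  have hPQn : ∀ j, ∀ hj : j < n, ¬ Step H (nseq P j) (nseq Q (j+1)) (ndir d j) :=
    fun j hj hs => hPQ ⟨j, hj⟩ ((step_nseq_iff H d P Q hj).mp hs)
  have hQPn : ∀ j, ∀ hj : j < n, ¬ Step H (nseq Q j) (nseq P (j+1)) (ndir d j) :=
    fun j hj hs => hQP ⟨j, hj⟩ ((step_nseq_iff H d Q P hj).mp hs)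
  have hPa : nseq P 0 = a := by
    rw [nseq_eq P (by omega)]; simpa using hP0
  have hQb : nseq Q 0 = b := by
    rw [nseq_eq Q (by omega)]; simpa using hQ0
  have hRb : nseq R 0 = b := by
    rw [nseq_eq R (by omega)]; simpa using hR0
  have hne : ∀ j, j ≤ n → nseq P j ≠ nseq Q j := by
    intro j hj heq
    rcases Nat.lt_or_ge j n with hjn | hjn
    · apply hPQn j hjn
      rw [heq]; exact hQs j hjn
    · have hjn' : j = n := by omega
      subst hjn'
      apply hPQn (j-1) (by omega)
      have h1 : j - 1 + 1 = j := by omega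
      rw [h1, ← heq]
      have := hPs (j-1) (by omega)
      rwa [h1] at this
  have hreach : ∀ j, j ≤ n → PairReach H (a, b) (nseq P j, nseq Q j) := by
    intro j
    induction j with
    | zero =>
      intro _
      rw [hPa, hQb]
      exact Relation.ReflTransGen.refl
    | succ j ih =>
      intro hj
      have hjn : j < n := by omega
      exact Relation.ReflTransGen.tail (ih (by omega))
        (pairArcD_of (hne j (by omega)) (hne (j+1) hj) (ndir d j)
          (hPs j hjn) (hQs j hjn) (hPQn j hjn))
  have hback : ∀ u v : V, u ≠ v → ord (u, v) ≤ k → PairReach H (a, b) (u, v) →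
      PairReach H (u, v) (a, b) := by
    intro u v huv hle hr
    by_contra hnr
    have := hord.2.1 (a, b) (u, v) hab huv hr hnr
    omega
  have key1 : Avoids H d P R := by
    by_contra hcon
    unfold Avoids at hcon
    push_neg at hcon
    obtain ⟨i0, hi0⟩ := hcon
    have hex : ∃ j, j < n ∧ Step H (nseq P j) (nseq R (j+1)) (ndir d j) :=
      ⟨i0.1, i0.2, (step_nseq_iff H d P R i0.2).mpr hi0⟩
    set i := Nat.find hex with hidef
    obtain ⟨hiN, hstepPR⟩ := Nat.find_spec hex
    have himin : ∀ j, j < i → ¬ Step H (nseq P j) (nseq R (j+1)) (ndir d j) := by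
      intro j hj hs
      exact Nat.find_min hex hj ⟨by omega, hs⟩
    have hQRne : nseq Q (i+1) ≠ nseq R (i+1) := by
      intro heq
      apply hPQn i hiN
      rw [heq]; exact hstepPR
    have harc : PairArcD H (nseq P i, nseq Q i) (nseq R (i+1), nseq Q (i+1)) :=
      pairArcD_of (hne i (by omega)) (Ne.symm hQRne) (ndir d i) hstepPR (hQs i hiN)
        (hPQn i hiN)
    have hr1 : PairReach H (a, b) (nseq R (i+1), nseq Q (i+1)) :=
      Relation.ReflTransGen.tail (hreach i (by omega)) harc
    have hordle : ord (nseq R (i+1), nseq Q (i+1)) ≤ k := by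
      have hal := hallow ⟨i+1, by omega⟩
      unfold KAllowed at hal
      rw [nseq_eq Q (by omega : i+1 < n+1), nseq_eq R (by omega : i+1 < n+1)] at hQRne ⊢
      rcases hal with heq | ⟨_, h2⟩
      · exact absurd heq hQRne
      · exact h2
    have hr2 := hback _ _ (Ne.symm hQRne) hordle hr1
    apply hH
    refine circularN_construct H (i+1) i (by omega) (by omega) (ndir d)
      (fun j => if j ≤ i then nseq P j else nseq R j) (fun j => nseq Q j)
      (fun j => nseq R j) ?_ ?_ ?_ ?_ ?_ ?_ ?_ ?_ ?_
    · intro j hj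
      rcases Nat.lt_or_ge j i with hji | hji
      · rw [if_pos (by omega : j ≤ i), if_pos (by omega : j + 1 ≤ i)]
        exact hPs j (by omega)
      · rw [if_pos (by omega : j ≤ i), if_neg (by omega : ¬ (j + 1 ≤ i)),
          (by omega : j = i)]
        exact hstepPR
    · intro j hj
      exact hQs j (by omega)
    · intro j hj
      exact hRs j (by omega)
    · intro j hj
      rw [if_pos (by omega : j ≤ i)]
      exact hPQn j (by omega)
    · rw [if_neg (by omega : ¬ (i + 1 ≤ i))]
    · rw [hRb, hQb]
    · intro j hj hs
      by_contra hc
      apply himin j (by omega)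
      rwa [if_pos (by omega : j ≤ i)] at hs
    · intro j hj _
      omega
    · rw [if_neg (by omega : ¬ (i + 1 ≤ i)), if_pos (by omega : 0 ≤ i), hPa, hQb]
      exact hr2
  refine ⟨key1, ?_⟩
  have hPRn : ∀ j, ∀ hj : j < n, ¬ Step H (nseq P j) (nseq R (j+1)) (ndir d j) :=
    fun j hj hs => key1 ⟨j, hj⟩ ((step_nseq_iff H d P R hj).mp hs)
  by_contra hcon
  unfold Avoids at hcon
  push_neg at hcon
  obtain ⟨i0, hi0⟩ := hcon
  set i := i0.1 with hidef
  have hiN : i < n := i0.2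
  have hstepRP : Step H (nseq R i) (nseq P (i+1)) (ndir d i) :=
    (step_nseq_iff H d R P hiN).mpr hi0
  have hQRne : nseq Q i ≠ nseq R i := by
    intro heq
    apply hQPn i hiN
    rw [heq]; exact hstepRP
  have harc : PairArcD H (nseq P (i+1), nseq Q (i+1)) (nseq R i, nseq Q i) :=
    pairArcD_of (hne (i+1) (by omega)) (Ne.symm hQRne) (!(ndir d i))
      (step_not.mpr hstepRP)
      (step_not.mpr (hQs i hiN))
      (fun hs => hQPn i hiN (step_not.mp hs))
  have hr1 : PairReach H (a, b) (nseq R i, nseq Q i) :=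
    Relation.ReflTransGen.tail (hreach (i+1) (by omega)) harc
  have hordle : ord (nseq R i, nseq Q i) ≤ k := by
    have hal := hallow ⟨i, by omega⟩
    unfold KAllowed at hal
    rw [nseq_eq Q (by omega : i < n+1), nseq_eq R (by omega : i < n+1)] at hQRne ⊢
    rcases hal with heq | ⟨_, h2⟩
    · exact absurd heq hQRne
    · exact h2
  have hr2 := hback _ _ (Ne.symm hQRne) hordle hr1
  apply hH
  refine circularN_construct H (i+2) i (by omega) (by omega)
    (fun j => if j ≤ i then ndir d j else !(ndir d i))
    (fun j => if j ≤ i+1 then nseq P j else nseq R i)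
    (fun j => if j ≤ i+1 then nseq Q j else nseq Q i)
    (fun j => if j ≤ i then nseq R j else if j = i+1 then nseq P (i+1) else nseq R i)
    ?_ ?_ ?_ ?_ ?_ ?_ ?_ ?_ ?_
  · intro j hj
    rcases Nat.lt_or_ge j (i+1) with hji | hji
    · rw [if_pos (by omega : j ≤ i), if_pos (by omega : j ≤ i+1),
        if_pos (by omega : j + 1 ≤ i+1)]
      exact hPs j (by omega)
    · rw [if_neg (by omega : ¬ (j ≤ i)), if_pos (by omega : j ≤ i+1),
        if_neg (by omega : ¬ (j + 1 ≤ i+1)), (by omega : j = i+1)]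
      exact step_not.mpr hstepRP
  · intro j hj
    rcases Nat.lt_or_ge j (i+1) with hji | hji
    · rw [if_pos (by omega : j ≤ i), if_pos (by omega : j ≤ i+1),
        if_pos (by omega : j + 1 ≤ i+1)]
      exact hQs j (by omega)
    · rw [if_neg (by omega : ¬ (j ≤ i)), if_pos (by omega : j ≤ i+1),
        if_neg (by omega : ¬ (j + 1 ≤ i+1)), (by omega : j = i+1)]
      exact step_not.mpr (hQs i hiN)
  · intro j hj
    rcases Nat.lt_or_ge j i with hji | hji
    · rw [if_pos (by omega : j ≤ i), if_pos (by omega : j ≤ i),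
        if_pos (by omega : j + 1 ≤ i)]
      exact hRs j (by omega)
    · rcases Nat.lt_or_ge j (i+1) with hji2 | hji2
      · rw [if_pos (by omega : j ≤ i), if_pos (by omega : j ≤ i),
          if_neg (by omega : ¬ (j + 1 ≤ i)), if_pos (by omega : j + 1 = i + 1),
          (by omega : j = i)]
        exact hstepRP
      · rw [if_neg (by omega : ¬ (j ≤ i)), if_neg (by omega : ¬ (j ≤ i)),
          if_pos (by omega : j = i + 1), if_neg (by omega : ¬ (j + 1 ≤ i)),
          if_neg (by omega : ¬ (j + 1 = i + 1))]
        exact step_not.mpr hstepRP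
  · intro j hj
    rcases Nat.lt_or_ge j (i+1) with hji | hji
    · rw [if_pos (by omega : j ≤ i), if_pos (by omega : j ≤ i+1),
        if_pos (by omega : j + 1 ≤ i+1)]
      exact hPQn j (by omega)
    · rw [if_neg (by omega : ¬ (j ≤ i)), if_pos (by omega : j ≤ i+1),
        if_neg (by omega : ¬ (j + 1 ≤ i+1)), (by omega : j = i+1)]
      exact fun hs => hQPn i hiN (step_not.mp hs)
  · rw [if_neg (by omega : ¬ (i + 2 ≤ i)), if_neg (by omega : ¬ (i + 2 = i + 1)),
      if_neg (by omega : ¬ (i + 2 ≤ i + 1))]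
  · rw [if_pos (by omega : 0 ≤ i), if_pos (by omega : 0 ≤ i + 1), hRb, hQb]
  · intro j hj hs
    by_contra hc
    rw [if_pos (by omega : j ≤ i), if_pos (by omega : j ≤ i+1),
      if_pos (by omega : j + 1 ≤ i)] at hs
    exact hPRn j (by omega) hs
  · intro j hj hs
    by_contra hc
    rw [if_neg (by omega : ¬ (j ≤ i)), if_neg (by omega : ¬ (j ≤ i)),
      if_pos (by omega : j = i + 1), if_neg (by omega : ¬ (j + 1 ≤ i + 1))] at hs
    exact hQPn i hiN (step_not.mp hs)
  · rw [if_neg (by omega : ¬ (i + 2 ≤ i + 1)), if_neg (by omega : ¬ (i + 2 ≤ i + 1)),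
      if_pos (by omega : 0 ≤ i + 1), if_pos (by omega : 0 ≤ i + 1), hPa, hQb]
    exact hr2


end DigraphListHom
end

section
/- Let H be a digraph with no circular N, with V(H⁺) ordered as p₁,…,p_m respecting the strong-component sink ordering, and let k be fixed with p_k = (a,b). Suppose P = a,a₁,…,a', Q = b,b₁,…,b', R = a,c₁,…,c' are congruent walks in H such that for every i the unordered pair {bᵢ,cᵢ} is k-allowed. If P and Q avoid each other, then R and Q avoid each other; in particular b' ≠ c'. -/
namespace DigraphListHom

variable {V W : Type*}

section AuxLemmas

variable {H : V → V → Prop}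

lemma step_true_iff {u v : V} : Step H u v true ↔ H u v := by simp [Step]

lemma step_false_iff {u v : V} : Step H u v false ↔ H v u := by simp [Step]

lemma pairArcD_fwd {u u' v v' : V} {dir : Bool}
    (hu : Step H u u' dir) (hv : Step H v v' dir) (huv' : ¬ Step H u v' dir)
    (h1 : u ≠ v) (h2 : u' ≠ v') : PairArcD H (u, v) (u', v') := by
  refine ⟨h1, h2, ?_⟩
  cases dir
  · exact Or.inr ⟨step_false_iff.mp hu, step_false_iff.mp hv,
      fun h => huv' (step_false_iff.mpr h)⟩
  · exact Or.inl ⟨step_true_iff.mp hu, step_true_iff.mp hv,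
      fun h => huv' (step_true_iff.mpr h)⟩

lemma pairArcD_bwd {u u' v v' : V} {dir : Bool}
    (hu : Step H u u' dir) (hv : Step H v v' dir) (hvu' : ¬ Step H v u' dir)
    (h1 : u ≠ v) (h2 : u' ≠ v') : PairArcD H (u', v') (u, v) := by
  refine ⟨h2, h1, ?_⟩
  cases dir
  · exact Or.inl ⟨step_false_iff.mp hu, step_false_iff.mp hv,
      fun h => hvu' (step_false_iff.mpr h)⟩
  · exact Or.inr ⟨step_true_iff.mp hu, step_true_iff.mp hv,
      fun h => hvu' (step_true_iff.mpr h)⟩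

lemma sameSCC_refl (p : V × V) : SameSCC H p p :=
  ⟨Relation.ReflTransGen.refl, Relation.ReflTransGen.refl⟩

lemma sameSCC_trans {p q r : V × V} (h1 : SameSCC H p q) (h2 : SameSCC H q r) :
    SameSCC H p r :=
  ⟨h1.1.trans h2.1, h2.2.trans h1.2⟩

lemma prefix_scc {dd : ℕ → Bool} {u v : ℕ → V} {N : ℕ}
    (hu : ∀ j < N, Step H (u j) (u (j+1)) (dd j))
    (hv : ∀ j < N, Step H (v j) (v (j+1)) (dd j))
    (huv : ∀ j < N, ¬ Step H (u j) (v (j+1)) (dd j))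
    (hvu : ∀ j < N, ¬ Step H (v j) (u (j+1)) (dd j))
    (h0 : u 0 ≠ v 0) :
    ∀ j, j ≤ N → u j ≠ v j ∧ SameSCC H (u 0, v 0) (u j, v j) := by
  intro j
  induction j with
  | zero => exact fun _ => ⟨h0, sameSCC_refl _⟩
  | succ j ih =>
    intro hj
    have hjN : j < N := hj
    obtain ⟨hne, hscc⟩ := ih (le_of_lt hjN)
    have hne' : u (j+1) ≠ v (j+1) := by
      intro he
      exact huv j hjN (he ▸ hu j hjN)
    have a1 := pairArcD_fwd (hu j hjN) (hv j hjN) (huv j hjN) hne hne'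
    have a2 := pairArcD_bwd (hu j hjN) (hv j hjN) (hvu j hjN) hne hne'
    exact ⟨hne', sameSCC_trans hscc
      ⟨Relation.ReflTransGen.single a1, Relation.ReflTransGen.single a2⟩⟩

lemma pairArc_step {p q : V × V} (h : PairArc H p q) :
    ∃ dir, Step H p.1 q.1 dir ∧ Step H p.2 q.2 dir ∧ ¬ Step H p.1 q.2 dir := by
  rcases h with ⟨h1, h2, h3⟩ | ⟨h1, h2, h3⟩
  · exact ⟨true, step_true_iff.mpr h1, step_true_iff.mpr h2,
      fun h => h3 (step_true_iff.mp h)⟩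
  · exact ⟨false, step_false_iff.mpr h1, step_false_iff.mpr h2,
      fun h => h3 (step_false_iff.mp h)⟩

lemma pairReach_walks {p q : V × V} (h : PairReach H p q) :
    ∃ (m : ℕ) (e : ℕ → Bool) (S T : ℕ → V),
      S 0 = p.1 ∧ T 0 = p.2 ∧ S m = q.1 ∧ T m = q.2 ∧
      (∀ j < m, Step H (S j) (S (j+1)) (e j)) ∧
      (∀ j < m, Step H (T j) (T (j+1)) (e j)) ∧
      (∀ j < m, ¬ Step H (S j) (T (j+1)) (e j)) := by
  induction h with
  | refl =>
    exact ⟨0, fun _ => true, fun _ => p.1, fun _ => p.2, rfl, rfl, rfl, rfl,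
      fun j hj => absurd hj (by omega), fun j hj => absurd hj (by omega),
      fun j hj => absurd hj (by omega)⟩
  | @tail b c hr harc ih =>
    obtain ⟨m, e, S, T, hS0, hT0, hSm, hTm, hS, hT, hST⟩ := ih
    obtain ⟨dir, s1, s2, s3⟩ := pairArc_step harc.2.2
    refine ⟨m+1, fun j => if j < m then e j else dir,
      fun j => if j ≤ m then S j else c.1,
      fun j => if j ≤ m then T j else c.2, ?_, ?_, ?_, ?_, ?_, ?_, ?_⟩
    · simpa using hS0
    · simpa using hT0
    · simp
    · simp
    · intro j hj
      rcases Nat.lt_or_ge j m with h1 | h1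
      · simp only [if_pos (by omega : j ≤ m), if_pos (by omega : j + 1 ≤ m), if_pos h1]
        exact hS j h1
      · have hjm : j = m := by omega
        subst hjm
        simp only [if_pos (le_refl j), if_neg (by omega : ¬ j + 1 ≤ j),
          if_neg (by omega : ¬ j < j)]
        rw [hSm]
        exact s1
    · intro j hj
      rcases Nat.lt_or_ge j m with h1 | h1
      · simp only [if_pos (by omega : j ≤ m), if_pos (by omega : j + 1 ≤ m), if_pos h1]
        exact hT j h1
      · have hjm : j = m := by omega
        subst hjm
        simp only [if_pos (le_refl j), if_neg (by omega : ¬ j + 1 ≤ j),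
          if_neg (by omega : ¬ j < j)]
        rw [hTm]
        exact s2
    · intro j hj
      rcases Nat.lt_or_ge j m with h1 | h1
      · simp only [if_pos (by omega : j ≤ m), if_pos (by omega : j + 1 ≤ m), if_pos h1]
        exact hST j h1
      · have hjm : j = m := by omega
        subst hjm
        simp only [if_pos (le_refl j), if_neg (by omega : ¬ j + 1 ≤ j),
          if_neg (by omega : ¬ j < j)]
        rw [hSm]
        exact s3

end AuxLemmas
section GlueLemma

variable {H : V → V → Prop}

lemma glue_circularN {i m : ℕ} {d' e : ℕ → Bool} {A B C S T : ℕ → V}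
    (hA : ∀ j ≤ i, Step H (A j) (A (j+1)) (d' j))
    (hB : ∀ j ≤ i, Step H (B j) (B (j+1)) (d' j))
    (hC : ∀ j < i, Step H (C j) (C (j+1)) (d' j))
    (hcross : Step H (C i) (A (i+1)) (d' i))
    (hS : ∀ j < m, Step H (S j) (S (j+1)) (e j))
    (hT : ∀ j < m, Step H (T j) (T (j+1)) (e j))
    (hST : ∀ j < m, ¬ Step H (S j) (T (j+1)) (e j))
    (hS0 : S 0 = A (i+1)) (hT0 : T 0 = B (i+1))
    (hSm : S m = A 0) (hTm : T m = B 0) (hC0 : C 0 = B 0)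
    (hAB : ∀ j ≤ i, ¬ Step H (A j) (B (j+1)) (d' j))
    (hAC : ∀ j < i, ¬ Step H (A j) (C (j+1)) (d' j)) :
    CircularN H := by
  classical
  set Nn : ℕ := i + 1 + m with hNn
  set D : ℕ → Bool := fun t => if t ≤ i then d' t else e (t - (i+1)) with hD
  set X : ℕ → V := fun t => if t ≤ i then A t else S (t - (i+1)) with hX
  set Y : ℕ → V := fun t => if t ≤ i then B t else T (t - (i+1)) with hY
  set Z : ℕ → V := fun t => if t ≤ i then C t else S (t - (i+1)) with hZ
  have hX1 : ∀ t, t ≤ i → X t = A t := by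
    intro t ht; simp only [hX]; rw [if_pos ht]
  have hX2 : ∀ t, i < t → X t = S (t - (i+1)) := by
    intro t ht; simp only [hX]; rw [if_neg (by omega)]
  have hY1 : ∀ t, t ≤ i → Y t = B t := by
    intro t ht; simp only [hY]; rw [if_pos ht]
  have hY2 : ∀ t, i < t → Y t = T (t - (i+1)) := by
    intro t ht; simp only [hY]; rw [if_neg (by omega)]
  have hZ1 : ∀ t, t ≤ i → Z t = C t := by
    intro t ht; simp only [hZ]; rw [if_pos ht]
  have hZ2 : ∀ t, i < t → Z t = S (t - (i+1)) := by
    intro t ht; simp only [hZ]; rw [if_neg (by omega)]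
  have hD1 : ∀ t, t ≤ i → D t = d' t := by
    intro t ht; simp only [hD]; rw [if_pos ht]
  have hD2 : ∀ t, i < t → D t = e (t - (i+1)) := by
    intro t ht; simp only [hD]; rw [if_neg (by omega)]
  have hXi1 : X (i+1) = A (i+1) := by rw [hX2 _ (by omega)]; simpa using hS0
  have hYi1 : Y (i+1) = B (i+1) := by rw [hY2 _ (by omega)]; simpa using hT0
  have hZi1 : Z (i+1) = A (i+1) := by rw [hZ2 _ (by omega)]; simpa using hS0
  -- the three walks
  have wX : ∀ j < Nn, Step H (X j) (X (j+1)) (D j) := by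
    intro j hj
    rcases Nat.lt_trichotomy j i with h1 | h1 | h1
    · rw [hX1 j (by omega), hX1 (j+1) (by omega), hD1 j (by omega)]
      exact hA j (by omega)
    · subst h1
      rw [hX1 j le_rfl, hXi1, hD1 j le_rfl]
      exact hA j le_rfl
    · rw [hX2 j h1, hX2 (j+1) (by omega), hD2 j h1,
        show j + 1 - (i+1) = (j - (i+1)) + 1 by omega]
      exact hS _ (by omega)
  have wY : ∀ j < Nn, Step H (Y j) (Y (j+1)) (D j) := by
    intro j hj
    rcases Nat.lt_trichotomy j i with h1 | h1 | h1
    · rw [hY1 j (by omega), hY1 (j+1) (by omega), hD1 j (by omega)]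
      exact hB j (by omega)
    · subst h1
      rw [hY1 j le_rfl, hYi1, hD1 j le_rfl]
      exact hB j le_rfl
    · rw [hY2 j h1, hY2 (j+1) (by omega), hD2 j h1,
        show j + 1 - (i+1) = (j - (i+1)) + 1 by omega]
      exact hT _ (by omega)
  have wZ : ∀ j < Nn, Step H (Z j) (Z (j+1)) (D j) := by
    intro j hj
    rcases Nat.lt_trichotomy j i with h1 | h1 | h1
    · rw [hZ1 j (by omega), hZ1 (j+1) (by omega), hD1 j (by omega)]
      exact hC j (by omega)
    · subst h1
      rw [hZ1 j le_rfl, hZi1, hD1 j le_rfl]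
      exact hcross
    · rw [hZ2 j h1, hZ2 (j+1) (by omega), hD2 j h1,
        show j + 1 - (i+1) = (j - (i+1)) + 1 by omega]
      exact hS _ (by omega)
  -- X avoids Y
  have aXY : ∀ j < Nn, ¬ Step H (X j) (Y (j+1)) (D j) := by
    intro j hj
    rcases Nat.lt_trichotomy j i with h1 | h1 | h1
    · rw [hX1 j (by omega), hY1 (j+1) (by omega), hD1 j (by omega)]
      exact hAB j (by omega)
    · subst h1
      rw [hX1 j le_rfl, hYi1, hD1 j le_rfl]
      exact hAB j le_rfl
    · rw [hX2 j h1, hY2 (j+1) (by omega), hD2 j h1,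
        show j + 1 - (i+1) = (j - (i+1)) + 1 by omega]
      exact hST _ (by omega)
  -- protection facts
  have pXZ : ∀ j, j < i → ¬ Step H (X j) (Z (j+1)) (D j) := by
    intro j hj
    rw [hX1 j (by omega), hZ1 (j+1) (by omega), hD1 j (by omega)]
    exact hAC j hj
  have pZY : ∀ j, i < j → j < Nn → ¬ Step H (Z j) (Y (j+1)) (D j) := by
    intro j h1 hj
    rw [hZ2 j h1, hY2 (j+1) (by omega), hD2 j h1,
      show j + 1 - (i+1) = (j - (i+1)) + 1 by omega]
    exact hST _ (by omega)
  -- endpoints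
  have hX0 : X 0 = A 0 := hX1 0 (by omega)
  have hXN : X Nn = A 0 := by
    rw [hX2 Nn (by omega), show Nn - (i+1) = m by omega, hSm]
  have hY0 : Y 0 = B 0 := hY1 0 (by omega)
  have hYN : Y Nn = B 0 := by
    rw [hY2 Nn (by omega), show Nn - (i+1) = m by omega, hTm]
  have hZ0 : Z 0 = B 0 := by rw [hZ1 0 (by omega)]; exact hC0
  have hZN : Z Nn = A 0 := by
    rw [hZ2 Nn (by omega), show Nn - (i+1) = m by omega, hSm]
  refine ⟨Nn, by omega, fun t => D t.1, fun t => X t.1, fun t => Y t.1, fun t => Z t.1,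
    ?_, ?_, ?_, ?_, ?_, ?_, ?_, ?_, ?_⟩
  · intro t
    show Step H (X t.castSucc.1) (X t.succ.1) (D t.1)
    rw [Fin.coe_castSucc, Fin.val_succ]
    exact wX t.1 t.2
  · intro t
    show Step H (Y t.castSucc.1) (Y t.succ.1) (D t.1)
    rw [Fin.coe_castSucc, Fin.val_succ]
    exact wY t.1 t.2
  · intro t
    show Step H (Z t.castSucc.1) (Z t.succ.1) (D t.1)
    rw [Fin.coe_castSucc, Fin.val_succ]
    exact wZ t.1 t.2
  · show X (Fin.last Nn).1 = X (0 : Fin (Nn+1)).1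
    rw [Fin.val_last, Fin.val_zero, hXN, hX0]
  · show Y (Fin.last Nn).1 = Y (0 : Fin (Nn+1)).1
    rw [Fin.val_last, Fin.val_zero, hYN, hY0]
  · show Z (0 : Fin (Nn+1)).1 = Y (0 : Fin (Nn+1)).1
    rw [Fin.val_zero, hZ0, hY0]
  · show Z (Fin.last Nn).1 = X (0 : Fin (Nn+1)).1
    rw [Fin.val_last, Fin.val_zero, hZN, hX0]
  · intro t hf
    have : Step H (X t.castSucc.1) (Y t.succ.1) (D t.1) := hf
    rw [Fin.coe_castSucc, Fin.val_succ] at this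
    exact aXY t.1 t.2 this
  · intro s t hxz hzy
    have h1 : Step H (X s.castSucc.1) (Z s.succ.1) (D s.1) := hxz
    have h2 : Step H (Z t.castSucc.1) (Y t.succ.1) (D t.1) := hzy
    rw [Fin.coe_castSucc, Fin.val_succ] at h1 h2
    have hs : i ≤ s.1 := by
      by_contra hc
      exact pXZ s.1 (by omega) h1
    have ht : t.1 ≤ i := by
      by_contra hc
      exact pZY t.1 (by omega) t.2 h2
    omega

end GlueLemma
/-- Lemma 4.2 ("Lemma newer"). -/
theorem statement6 (H : V → V → Prop) (hH : ¬ CircularN H)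
    (ord : V × V → ℕ) (hord : GoodOrd H ord)
    (k : ℕ) (a b : V) (hab : a ≠ b) (hk : ord (a, b) = k)
    {n : ℕ} (d : Fin n → Bool) (P Q R : Fin (n + 1) → V)
    (hP : IsWalk H d P) (hQ : IsWalk H d Q) (hR : IsWalk H d R)
    (hP0 : P 0 = a) (hQ0 : Q 0 = b) (hR0 : R 0 = a)
    (hallow : ∀ i, KAllowed ord k (Q i) (R i))
    (hPQ : Avoids H d P Q) (hQP : Avoids H d Q P) :
    (Avoids H d R Q ∧ Avoids H d Q R) ∧ Q (Fin.last n) ≠ R (Fin.last n) := by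
  classical
  have hle : ∀ t : ℕ, min t n < n + 1 := fun t => Nat.lt_succ_of_le (min_le_right t n)
  set p' : ℕ → V := fun t => P ⟨min t n, hle t⟩ with hp'def
  set q' : ℕ → V := fun t => Q ⟨min t n, hle t⟩ with hq'def
  set r' : ℕ → V := fun t => R ⟨min t n, hle t⟩ with hr'def
  set d' : ℕ → Bool := fun t => if h : t < n then d ⟨t, h⟩ else true with hd'def
  have pv : ∀ t (ht : t < n + 1), p' t = P ⟨t, ht⟩ := by
    intro t ht
    simp only [hp'def]
    exact congrArg P (Fin.ext (Nat.min_eq_left (by omega)))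
  have qv : ∀ t (ht : t < n + 1), q' t = Q ⟨t, ht⟩ := by
    intro t ht
    simp only [hq'def]
    exact congrArg Q (Fin.ext (Nat.min_eq_left (by omega)))
  have rv : ∀ t (ht : t < n + 1), r' t = R ⟨t, ht⟩ := by
    intro t ht
    simp only [hr'def]
    exact congrArg R (Fin.ext (Nat.min_eq_left (by omega)))
  have dv : ∀ t (ht : t < n), d' t = d ⟨t, ht⟩ := by
    intro t ht
    simp only [hd'def]
    rw [dif_pos ht]
  have hp0 : p' 0 = a := by
    rw [pv 0 (by omega), show (⟨0, by omega⟩ : Fin (n+1)) = 0 from Fin.ext (by simp)]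
    exact hP0
  have hq0 : q' 0 = b := by
    rw [qv 0 (by omega), show (⟨0, by omega⟩ : Fin (n+1)) = 0 from Fin.ext (by simp)]
    exact hQ0
  have hr0 : r' 0 = a := by
    rw [rv 0 (by omega), show (⟨0, by omega⟩ : Fin (n+1)) = 0 from Fin.ext (by simp)]
    exact hR0
  have hP' : ∀ j, j < n → Step H (p' j) (p' (j+1)) (d' j) := by
    intro j hj
    rw [pv j (by omega), pv (j+1) (by omega), dv j hj]
    exact hP ⟨j, hj⟩
  have hQ' : ∀ j, j < n → Step H (q' j) (q' (j+1)) (d' j) := by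
    intro j hj
    rw [qv j (by omega), qv (j+1) (by omega), dv j hj]
    exact hQ ⟨j, hj⟩
  have hR' : ∀ j, j < n → Step H (r' j) (r' (j+1)) (d' j) := by
    intro j hj
    rw [rv j (by omega), rv (j+1) (by omega), dv j hj]
    exact hR ⟨j, hj⟩
  have hPQ' : ∀ j, j < n → ¬ Step H (p' j) (q' (j+1)) (d' j) := by
    intro j hj
    rw [pv j (by omega), qv (j+1) (by omega), dv j hj]
    exact hPQ ⟨j, hj⟩
  have hQP' : ∀ j, j < n → ¬ Step H (q' j) (p' (j+1)) (d' j) := by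
    intro j hj
    rw [qv j (by omega), pv (j+1) (by omega), dv j hj]
    exact hQP ⟨j, hj⟩
  -- the pairs (Q_j, P_j) all lie in the strong component of (b, a)
  have sccQP := prefix_scc hQ' hP' hQP' hPQ' (by rw [hq0, hp0]; exact Ne.symm hab)
  rw [hq0, hp0] at sccQP
  -- main claim: there are no faithful edges between R and Q
  have main : ∀ i, i < n →
      (¬ Step H (r' i) (q' (i+1)) (d' i)) ∧ (¬ Step H (q' i) (r' (i+1)) (d' i)) := by
    intro i
    induction i using Nat.strong_induction_on with
    | _ i IH =>
      intro hin
      have sccRQ := prefix_scc (N := i)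
        (fun j hj => hR' j (by omega)) (fun j hj => hQ' j (by omega))
        (fun j hj => (IH j hj (by omega)).1) (fun j hj => (IH j hj (by omega)).2)
        (by rw [hr0, hq0]; exact hab)
      rw [hr0, hq0] at sccRQ
      -- Part 1: no faithful edge from R to Q at i
      have hnRQ : ¬ Step H (r' i) (q' (i+1)) (d' i) := by
        intro hcross
        obtain ⟨m, e, S, T, hS0, hT0, hSm, hTm, hS, hT, hST⟩ :=
          pairReach_walks ((sccQP (i+1) (by omega)).2.2)
        exact hH (glue_circularN (A := q') (B := p') (C := r') (i := i)
          (fun j hj => hQ' j (by omega)) (fun j hj => hP' j (by omega))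
          (fun j hj => hR' j (by omega)) hcross hS hT hST hS0 hT0
          (hSm.trans hq0.symm) (hTm.trans hp0.symm) (hr0.trans hp0.symm)
          (fun j hj => hQP' j (by omega))
          (fun j hj => (IH j hj (by omega)).2))
      refine ⟨hnRQ, ?_⟩
      -- Part 2: no faithful edge from Q to R at i
      intro hcross
      have hne1 : r' i ≠ q' i := (sccRQ i le_rfl).1
      have hne2 : r' (i+1) ≠ q' (i+1) := by
        intro he
        exact hnRQ (he ▸ hR' i hin)
      have arc : PairArcD H (r' i, q' i) (r' (i+1), q' (i+1)) :=
        pairArcD_fwd (hR' i hin) (hQ' i hin) hnRQ hne1 hne2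
      have reach1 : PairReach H (a, b) (r' (i+1), q' (i+1)) :=
        Relation.ReflTransGen.tail (sccRQ i le_rfl).2.1 arc
      have hor : ord (r' (i+1), q' (i+1)) ≤ k := by
        have h1 : (i + 1 : ℕ) < n + 1 := by omega
        have := hallow ⟨i+1, h1⟩
        rw [show Q ⟨i+1, h1⟩ = q' (i+1) from (qv (i+1) h1).symm,
          show R ⟨i+1, h1⟩ = r' (i+1) from (rv (i+1) h1).symm] at this
        rcases this with he | ⟨_, h2⟩
        · exact absurd he.symm hne2
        · exact h2
      have back : PairReach H (r' (i+1), q' (i+1)) (a, b) := by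
        by_contra hnb
        have := hord.2.1 (a, b) (r' (i+1), q' (i+1)) hab hne2 reach1 hnb
        rw [hk] at this
        omega
      obtain ⟨m, e, S, T, hS0, hT0, hSm, hTm, hS, hT, hST⟩ := pairReach_walks back
      refine hH (glue_circularN (A := r') (B := q') (C := q') (i := i)
        (fun j hj => hR' j (by omega)) (fun j hj => hQ' j (by omega))
        (fun j hj => hQ' j (by omega)) hcross hS hT hST hS0 hT0
        (hSm.trans hr0.symm) (hTm.trans hq0.symm) rfl ?_ ?_)
      · intro j hj
        rcases Nat.lt_or_eq_of_le hj with h1 | h1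
        · exact (IH j h1 (by omega)).1
        · subst h1; exact hnRQ
      · intro j hj
        exact (IH j hj (by omega)).1
  have sccFull := prefix_scc hR' hQ' (fun j hj => (main j hj).1)
    (fun j hj => (main j hj).2) (by rw [hr0, hq0]; exact hab)
  refine ⟨⟨?_, ?_⟩, ?_⟩
  · intro t hf
    have h2 : Step H (r' t.1) (q' (t.1+1)) (d' t.1) := by
      rw [rv t.1 (by omega), qv (t.1+1) (by omega), dv t.1 t.2]
      exact hf
    exact (main t.1 t.2).1 h2
  · intro t hf
    have h2 : Step H (q' t.1) (r' (t.1+1)) (d' t.1) := by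
      rw [qv t.1 (by omega), rv (t.1+1) (by omega), dv t.1 t.2]
      exact hf
    exact (main t.1 t.2).2 h2
  · intro he
    apply (sccFull n le_rfl).1
    rw [rv n (by omega), qv n (by omega)]
    exact he.symm

end DigraphListHom
end

section
/- Let (x,y) and (x',y') be vertices of the pair digraph H⁺ of a digraph H with no circular N. If μ(x,y) = μ(x',y') and there is a directed walk from (x,y) to (x',y') in H⁺, then (x,y) and (x',y') lie in the same strong component of H⁺, and moreover all arcs of that walk are double. -/
namespace DigraphListHom

variable {V W : Type*}

section Statement12Aux

variable (H : V → V → Prop)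

lemma condChain_zero (p : V × V) : CondChain H p 0 :=
  ⟨Fin.elim0, fun i => i.elim0, fun i => i.elim0, fun i => i.elim0,
    fun h => absurd h (by omega)⟩

lemma condChain_card_le [Fintype V] {p : V × V} {m : ℕ} (h : CondChain H p m) :
    m ≤ Fintype.card (V × V) := by
  obtain ⟨r, -, h2, -, -⟩ := h
  have hinj : Function.Injective r := by
    intro i j hij
    rcases lt_trichotomy i j with hlt | heq | hgt
    · exact absurd (show PairReach H (r j) (r i) by
        rw [hij]; exact Relation.ReflTransGen.refl) (h2 i j hlt).2
    · exact heq
    · exact absurd (show PairReach H (r i) (r j) by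
        rw [hij]; exact Relation.ReflTransGen.refl) (h2 j i hgt).2
  simpa using Fintype.card_le_of_injective r hinj

lemma bddAbove_condChain [Fintype V] (p : V × V) : BddAbove {m | CondChain H p m} :=
  ⟨Fintype.card (V × V), fun _ hm => condChain_card_le H hm⟩

lemma mu_mem [Fintype V] (p : V × V) : CondChain H p (mu H p) := by
  have hne : {m | CondChain H p m}.Nonempty := ⟨0, condChain_zero H p⟩
  have h := Nat.sSup_mem hne (bddAbove_condChain H p)
  exact h

lemma condChain_congr {p q : V × V} (hpq : PairReach H p q) (hqp : PairReach H q p)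
    {m : ℕ} (h : CondChain H p m) : CondChain H q m := by
  obtain ⟨r, h1, h2, h3, h4⟩ := h
  exact ⟨r, h1, h2, fun i => (h3 i).trans hpq, fun hm => hqp.trans (h4 hm)⟩

lemma mu_eq_of_scc [Fintype V] {p q : V × V} (h : SameSCC H p q) : mu H p = mu H q := by
  have hset : {m | CondChain H p m} = {m | CondChain H q m} := Set.ext fun m =>
    ⟨condChain_congr H h.1 h.2, condChain_congr H h.2 h.1⟩
  unfold mu
  rw [hset]

lemma mu_lt [Fintype V] {p q : V × V} (harc : PairArcD H p q) (hback : ¬ PairReach H q p) :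
    mu H p < mu H q := by
  have hpq : PairReach H p q := Relation.ReflTransGen.single harc
  have key : CondChain H q (mu H p + 1) := by
    obtain ⟨r, h1, h2, h3, h4⟩ := mu_mem H p
    refine ⟨fun j => if h : (j : ℕ) < mu H p then r ⟨j, h⟩ else q, ?_, ?_, ?_, ?_⟩
    · intro j
      by_cases h : (j : ℕ) < mu H p
      · simp only [dif_pos h]
        exact h1 _
      · simp only [dif_neg h]
        exact harc.2.1
    · intro i j hij
      have hiv : (i : ℕ) < (j : ℕ) := hij
      have hjlt := j.isLt
      by_cases hj : (j : ℕ) < mu H p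
      · have hi : (i : ℕ) < mu H p := by omega
        simp only [dif_pos hi, dif_pos hj]
        exact h2 ⟨i, hi⟩ ⟨j, hj⟩ hiv
      · have hi : (i : ℕ) < mu H p := by omega
        simp only [dif_pos hi, dif_neg hj]
        exact ⟨(h3 ⟨i, hi⟩).trans hpq, fun hq => hback (hq.trans (h3 ⟨i, hi⟩))⟩
    · intro j
      by_cases h : (j : ℕ) < mu H p
      · simp only [dif_pos h]
        exact (h3 ⟨j, h⟩).trans hpq
      · simp only [dif_neg h]
        exact Relation.ReflTransGen.refl
    · intro h0
      dsimp only
      split_ifs with h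
      · exfalso
        revert h
        simp
      · exact Relation.ReflTransGen.refl
  have : mu H p + 1 ≤ mu H q := le_csSup (bddAbove_condChain H q) key
  omega

lemma circularN_of_faithful (m : ℕ) (hm : 0 < m) (d : ℕ → Bool) (x y : ℕ → V)
    (hx : ∀ i < m, Step H (x i) (x (i + 1)) (d i))
    (hy : ∀ i < m, Step H (y i) (y (i + 1)) (d i))
    (hcx : x m = x 0) (hcy : y m = y 0)
    (hav : ∀ i < m, ¬ Step H (x i) (y (i + 1)) (d i))
    (hf : Step H (y 0) (x 1) (d 0)) : CircularN H := by
  refine ⟨m, hm, fun i => d i, fun j => x j, fun j => y j,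
    fun j => if (j : ℕ) = 0 then y 0 else x j, ?_, ?_, ?_, ?_, ?_, ?_, ?_, ?_, ?_⟩
  · intro i
    show Step H (x _) (x _) (d _)
    simp only [Fin.coe_castSucc, Fin.val_succ]
    exact hx i i.isLt
  · intro i
    show Step H (y _) (y _) (d _)
    simp only [Fin.coe_castSucc, Fin.val_succ]
    exact hy i i.isLt
  · intro i
    show Step H _ _ (d _)
    by_cases h0 : (i : ℕ) = 0
    · simp only [Fin.coe_castSucc, Fin.val_succ, h0, if_pos rfl,
        if_neg (by omega : ¬ (0 : ℕ) + 1 = 0)]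
      exact hf
    · simp only [Fin.coe_castSucc, Fin.val_succ, if_neg h0,
        if_neg (by omega : ¬ (i : ℕ) + 1 = 0)]
      exact hx i i.isLt
  · show x _ = x _
    simp only [Fin.val_last, Fin.val_zero]
    exact hcx
  · show y _ = y _
    simp only [Fin.val_last, Fin.val_zero]
    exact hcy
  · simp
  · simp only [Fin.val_last, if_neg hm.ne']
    exact hcx
  · intro i hFA
    have : Step H (x i) (y ((i : ℕ) + 1)) (d i) := by
      simpa only [FaithfulAt, Fin.coe_castSucc, Fin.val_succ] using hFA
    exact hav i i.isLt this
  · intro i j _ hZY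
    by_cases h0 : (j : ℕ) = 0
    · omega
    · exfalso
      apply hav j j.isLt
      simpa only [FaithfulAt, Fin.coe_castSucc, Fin.val_succ, if_neg h0] using hZY

lemma pairArc_reverse (hH : ¬ CircularN H) (m : ℕ) (hm : 0 < m) (f : ℕ → V × V)
    (hc : f m = f 0) (ha : ∀ i < m, PairArc H (f i) (f (i + 1))) :
    PairArc H (f 1) (f 0) := by
  classical
  set d : ℕ → Bool := fun i =>
    if H (f i).1 (f (i + 1)).1 ∧ H (f i).2 (f (i + 1)).2 ∧ ¬ H (f i).1 (f (i + 1)).2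
    then true else false with hd
  have hprop : ∀ i < m,
      (d i = true ∧ H (f i).1 (f (i + 1)).1 ∧ H (f i).2 (f (i + 1)).2 ∧
        ¬ H (f i).1 (f (i + 1)).2) ∨
      (d i = false ∧ H (f (i + 1)).1 (f i).1 ∧ H (f (i + 1)).2 (f i).2 ∧
        ¬ H (f (i + 1)).2 (f i).1) := by
    intro i him
    by_cases h : H (f i).1 (f (i + 1)).1 ∧ H (f i).2 (f (i + 1)).2 ∧ ¬ H (f i).1 (f (i + 1)).2
    · exact Or.inl ⟨by rw [hd]; exact if_pos h, h⟩
    · refine Or.inr ⟨by rw [hd]; exact if_neg h, ?_⟩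
      rcases ha i him with h1 | h2
      · exact absurd h1 h
      · exact h2
  have hx : ∀ i < m, Step H (f i).1 (f (i + 1)).1 (d i) := by
    intro i him
    rcases hprop i him with ⟨hdt, h1, -, -⟩ | ⟨hdf, h1, -, -⟩
    · rw [hdt]; simpa [Step] using h1
    · rw [hdf]; simpa [Step] using h1
  have hy : ∀ i < m, Step H (f i).2 (f (i + 1)).2 (d i) := by
    intro i him
    rcases hprop i him with ⟨hdt, -, h1, -⟩ | ⟨hdf, -, h1, -⟩
    · rw [hdt]; simpa [Step] using h1
    · rw [hdf]; simpa [Step] using h1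
  have hav : ∀ i < m, ¬ Step H (f i).1 (f (i + 1)).2 (d i) := by
    intro i him
    rcases hprop i him with ⟨hdt, -, -, h1⟩ | ⟨hdf, -, -, h1⟩
    · rw [hdt]; simpa [Step] using h1
    · rw [hdf]; simpa [Step] using h1
  have hnf : ¬ Step H (f 0).2 (f 1).1 (d 0) := by
    intro hstep
    exact hH (circularN_of_faithful H m hm d (fun j => (f j).1) (fun j => (f j).2) hx hy
      (congrArg Prod.fst hc) (congrArg Prod.snd hc) hav hstep)
  rcases hprop 0 hm with ⟨hdt, h1, h2, -⟩ | ⟨hdf, h1, h2, -⟩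
  · right
    refine ⟨h1, h2, ?_⟩
    rw [hdt] at hnf
    simpa [Step] using hnf
  · left
    refine ⟨h1, h2, ?_⟩
    rw [hdf] at hnf
    simpa [Step] using hnf

lemma reach_toWalk {b a : V × V} (h : PairReach H b a) :
    ∃ m, ∃ f : ℕ → V × V, f 0 = b ∧ f m = a ∧ ∀ i < m, PairArcD H (f i) (f (i + 1)) := by
  induction h with
  | refl => exact ⟨0, fun _ => b, rfl, rfl, by omega⟩
  | @tail c a' hbc harc ih =>
    obtain ⟨m, f, h0, hm, hstep⟩ := ih
    refine ⟨m + 1, fun j => if j ≤ m then f j else a', by simp [h0], by simp, ?_⟩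
    intro i him
    rcases Nat.lt_or_ge i m with h | h
    · simp only [if_pos (Nat.le_of_lt h), if_pos (Nat.succ_le_of_lt h)]
      exact hstep i h
    · have hieq : i = m := by omega
      subst hieq
      simp only [if_pos le_rfl, if_neg (by omega : ¬ i + 1 ≤ i), hm]
      exact harc

lemma double_arc (hH : ¬ CircularN H) {p q : V × V} (hpq : PairArcD H p q)
    (hqp : PairReach H q p) : PairArcD H q p := by
  obtain ⟨m, f, h0, hm, hstep⟩ := reach_toWalk H hqp
  refine ⟨hpq.2.1, hpq.1, ?_⟩
  set g : ℕ → V × V := fun j => if j = 0 then p else f (j - 1) with hg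
  have harc : ∀ i < m + 1, PairArc H (g i) (g (i + 1)) := by
    intro i him
    rcases Nat.eq_zero_or_pos i with rfl | hi
    · simp only [hg, if_pos rfl, if_neg (by omega : ¬ (0 : ℕ) + 1 = 0)]
      simpa [h0] using hpq.2.2
    · have h1 : ¬ i = 0 := by omega
      have h2 : ¬ i + 1 = 0 := by omega
      simp only [hg, if_neg h1, if_neg h2]
      have hlt : i - 1 < m := by omega
      have := (hstep (i - 1) hlt).2.2
      rw [show i - 1 + 1 = i from by omega] at this
      rw [show i + 1 - 1 = i from rfl]
      rw [show i = i - 1 + 1 from by omega] at this ⊢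
      exact this
  have hc : g (m + 1) = g 0 := by
    simp [hg, hm]
  have := pairArc_reverse H hH (m + 1) (Nat.succ_pos m) g hc harc
  simpa [hg, h0] using this

end Statement12Aux

/-- equal `μ` plus reachability forces the same strong component,
and all arcs of the walk are double. -/
theorem statement12 [Fintype V] (H : V → V → Prop) (hH : ¬ CircularN H)
    {n : ℕ} (w : Fin (n + 1) → V × V)
    (hw : ∀ i : Fin n, PairArcD H (w i.castSucc) (w i.succ))
    (hv : (w 0).1 ≠ (w 0).2)
    (hmu : mu H (w 0) = mu H (w (Fin.last n))) :
    SameSCC H (w 0) (w (Fin.last n)) ∧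
      ∀ i : Fin n, PairArcD H (w i.succ) (w i.castSucc) := by
  have step : ∀ i : Fin n, mu H (w i.castSucc) ≤ mu H (w i.succ) := by
    intro i
    by_cases hb : PairReach H (w i.succ) (w i.castSucc)
    · exact le_of_eq (mu_eq_of_scc H ⟨Relation.ReflTransGen.single (hw i), hb⟩)
    · exact (mu_lt H (hw i) hb).le
  have mono : ∀ k : ℕ, ∀ hk : k ≤ n, mu H (w 0) ≤ mu H (w ⟨k, by omega⟩) := by
    intro k
    induction k with
    | zero =>
      intro _
      have h00 : (0 : Fin (n + 1)) = ⟨0, by omega⟩ := Fin.ext (by simp)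
      rw [← h00]
    | succ k ih =>
      intro hk
      have h1 := ih (by omega)
      have h2 := step ⟨k, by omega⟩
      exact h1.trans h2
  have mono2 : ∀ j : ℕ, j ≤ n → mu H (w ⟨n - j, by omega⟩) ≤ mu H (w (Fin.last n)) := by
    intro j
    induction j with
    | zero =>
      intro _
      have hl : (Fin.last n) = (⟨n - 0, by omega⟩ : Fin (n + 1)) := Fin.ext (by simp)
      rw [← hl]
    | succ j ih =>
      intro hj
      have hstep := step ⟨n - (j + 1), by omega⟩
      have heq : (Fin.succ (⟨n - (j + 1), by omega⟩ : Fin n)) = (⟨n - j, by omega⟩ : Fin (n + 1)) :=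
        Fin.ext (by show n - (j + 1) + 1 = n - j; omega)
      calc mu H (w ⟨n - (j + 1), by omega⟩)
          ≤ mu H (w (Fin.succ ⟨n - (j + 1), by omega⟩)) := hstep
        _ ≤ mu H (w (Fin.last n)) := by rw [heq]; exact ih (by omega)
  have mono2' : ∀ k : ℕ, ∀ hk : k ≤ n, mu H (w ⟨k, by omega⟩) ≤ mu H (w (Fin.last n)) := by
    intro k hk
    have h := mono2 (n - k) (by omega)
    have heq : (⟨n - (n - k), by omega⟩ : Fin (n + 1)) = ⟨k, by omega⟩ :=
      Fin.ext (by show n - (n - k) = k; omega)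
    rwa [heq] at h
  have hall : ∀ i : Fin n, PairReach H (w i.succ) (w i.castSucc) := by
    intro i
    by_contra hb
    have hlt := mu_lt H (hw i) hb
    have h1 : mu H (w 0) ≤ mu H (w i.castSucc) := mono i.val (by omega)
    have h2 : mu H (w i.succ) ≤ mu H (w (Fin.last n)) := mono2' (i.val + 1) (by omega)
    omega
  refine ⟨?_, fun i => double_arc H hH (hw i) (hall i)⟩
  have scc : ∀ k : ℕ, ∀ hk : k ≤ n, SameSCC H (w 0) (w ⟨k, by omega⟩) := by
    intro k
    induction k with
    | zero =>
      intro _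
      have h00 : (0 : Fin (n + 1)) = ⟨0, by omega⟩ := Fin.ext (by simp)
      rw [← h00]
      exact ⟨Relation.ReflTransGen.refl, Relation.ReflTransGen.refl⟩
    | succ k ih =>
      intro hk
      obtain ⟨hfwd, hbwd⟩ := ih (by omega)
      exact ⟨hfwd.trans (Relation.ReflTransGen.single (hw ⟨k, by omega⟩)),
        (hall ⟨k, by omega⟩).trans hbwd⟩
  have hl : (Fin.last n) = (⟨n, by omega⟩ : Fin (n + 1)) := Fin.ext (by simp)
  rw [hl]
  exact scc n le_rfl

end DigraphListHom
end

section
/- If a digraph H contains a circular N, then H contains either a pair of independent edges or a bicycle. -/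
namespace DigraphListHom

variable {V W : Type*}

/-- Auxiliary: in a boolean sequence, between a `false` and a later `true`
there is a rise (`false` immediately followed by `true`). -/
lemma find_rise (f : ℕ → Bool) : ∀ b a, a ≤ b → f a = false → f b = true →
    ∃ m, a ≤ m ∧ m < b ∧ f m = false ∧ f (m + 1) = true := by
  intro b
  induction b with
  | zero =>
    intro a ha h0 h1
    interval_cases a
    rw [h0] at h1; cases h1
  | succ b ih =>
    intro a ha h0 h1
    rcases eq_or_lt_of_le ha with rfl | h
    · rw [h0] at h1; cases h1
    · cases hb : f b with
      | false => exact ⟨b, by omega, by omega, hb, h1⟩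
      | true =>
        obtain ⟨m, h1', h2', h3', h4'⟩ := ih a (by omega) h0 hb
        exact ⟨m, h1', by omega, h3', h4'⟩

/-- a circular `N` yields independent edges or a bicycle. -/
theorem statement13 (H : V → V → Prop) (hH : CircularN H) :
    IndependentEdges H ∨ Bicycle H := by
  by_cases hInd : IndependentEdges H
  · exact Or.inl hInd
  right
  have NI : ∀ a b c e, H a b → H c e → H a e ∨ H c b := by
    intro a b c e hab hce
    by_contra hcon
    push_neg at hcon
    exact hInd ⟨a, b, c, e, hab, hce, hcon.1, hcon.2⟩
  obtain ⟨n, hn, d, x, y, z, hX, hY, _, hx, hy, _, _, hA, _⟩ := hH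
  -- a valley (backward step followed by forward step) is impossible
  have valley : ∀ j k : Fin n, (j : ℕ) + 1 = (k : ℕ) → d j = false → d k = true → False := by
    intro j k hjk hj hk
    have e1 := hX j
    rw [hj] at e1
    simp only [Step, if_false, Bool.false_eq_true, ite_false] at e1
    have e2 := hY k
    rw [hk] at e2
    simp only [Step, if_true, ite_true] at e2
    have a1 := hA j
    simp only [FaithfulAt, Step, hj, Bool.false_eq_true, ite_false] at a1
    have a2 := hA k
    simp only [FaithfulAt, Step, hk, ite_true] at a2
    have hsc : j.succ = k.castSucc := by
      apply Fin.ext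
      simp [hjk]
    rcases NI _ _ _ _ e2 e1 with h | h
    · rw [← hsc] at h; exact a1 h
    · rw [hsc] at h; exact a2 h
  -- a seam valley (last step backward, first step forward) is impossible
  have seam : d ⟨n - 1, by omega⟩ = false → d ⟨0, hn⟩ = true → False := by
    intro hlast h0
    set j : Fin n := ⟨n - 1, by omega⟩ with hjdef
    set k : Fin n := ⟨0, hn⟩ with hkdef
    have e1 := hX j
    rw [hlast] at e1
    simp only [Step, Bool.false_eq_true, ite_false] at e1
    have e2 := hY k
    rw [h0] at e2
    simp only [Step, ite_true] at e2
    have a1 := hA j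
    simp only [FaithfulAt, Step, hlast, Bool.false_eq_true, ite_false] at a1
    have a2 := hA k
    simp only [FaithfulAt, Step, h0, ite_true] at a2
    have hjs : j.succ = Fin.last n := by
      apply Fin.ext
      simp [hjdef, Fin.last]
      omega
    rw [hjs, hx] at e1
    rw [hjs, hy] at a1
    have hkc : k.castSucc = (0 : Fin (n + 1)) := by
      apply Fin.ext
      simp [hkdef]
    rw [hkc] at e2 a2
    rcases NI _ _ _ _ e2 e1 with h | h
    · exact a1 h
    · exact a2 h
  by_cases hall : ∀ i : Fin n, d i = true
  · -- all steps forward: direct bicycle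
    refine ⟨n, hn, x, y, hx, hy, fun i => ?_⟩
    have hXi := hX i
    rw [hall i] at hXi
    simp only [Step, ite_true] at hXi
    have hYi := hY i
    rw [hall i] at hYi
    simp only [Step, ite_true] at hYi
    have hAi := hA i
    simp only [FaithfulAt, Step, hall i, ite_true] at hAi
    refine ⟨hXi, hYi, hAi, ?_⟩
    rcases NI _ _ _ _ hYi hXi with h | h
    · exact h
    · exact absurd h hAi
  by_cases hallf : ∀ i : Fin n, d i = false
  · -- all steps backward: reversed bicycle
    refine ⟨n, hn, fun m => y ⟨n - (m : ℕ), by omega⟩, fun m => x ⟨n - (m : ℕ), by omega⟩,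
      ?_, ?_, fun i => ?_⟩
    · have h1 : (⟨n - ((Fin.last n : Fin (n+1)) : ℕ), by omega⟩ : Fin (n + 1)) = 0 := by
        apply Fin.ext; simp [Fin.last]
      have h2 : (⟨n - ((0 : Fin (n+1)) : ℕ), by omega⟩ : Fin (n + 1)) = Fin.last n := by
        apply Fin.ext; simp [Fin.last]
      beta_reduce
      rw [h1, h2, hy]
    · have h1 : (⟨n - ((Fin.last n : Fin (n+1)) : ℕ), by omega⟩ : Fin (n + 1)) = 0 := by
        apply Fin.ext; simp [Fin.last]
      have h2 : (⟨n - ((0 : Fin (n+1)) : ℕ), by omega⟩ : Fin (n + 1)) = Fin.last n := by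
        apply Fin.ext; simp [Fin.last]
      beta_reduce
      rw [h1, h2, hx]
    · have hin : (i : ℕ) < n := i.isLt
      set k : Fin n := ⟨n - 1 - (i : ℕ), by omega⟩ with hkdef
      have ekc : k.castSucc = (⟨n - ((i.succ : Fin (n+1)) : ℕ), by omega⟩ : Fin (n + 1)) := by
        apply Fin.ext
        simp [hkdef, Fin.succ]
        omega
      have eks : k.succ = (⟨n - ((i.castSucc : Fin (n+1)) : ℕ), by omega⟩ : Fin (n + 1)) := by
        apply Fin.ext
        simp [hkdef, Fin.succ]
        omega
      have hXk := hX k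
      rw [hallf k] at hXk
      simp only [Step, Bool.false_eq_true, ite_false] at hXk
      have hYk := hY k
      rw [hallf k] at hYk
      simp only [Step, Bool.false_eq_true, ite_false] at hYk
      have hAk := hA k
      simp only [FaithfulAt, Step, hallf k, Bool.false_eq_true, ite_false] at hAk
      rw [ekc, eks] at hXk hYk hAk
      refine ⟨hYk, hXk, hAk, ?_⟩
      rcases NI _ _ _ _ hYk hXk with h | h
      · exact absurd h hAk
      · exact h
  -- mixed pattern: impossible
  exfalso
  obtain ⟨a, ha⟩ := not_forall.1 hall
  obtain ⟨b, hb⟩ := not_forall.1 hallf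
  rw [Bool.not_eq_true] at ha
  rw [Bool.not_eq_false] at hb
  set f : ℕ → Bool := fun m => if h : m < n then d ⟨m, h⟩ else true with hfdef
  have hfval : ∀ (m : ℕ) (h : m < n), f m = d ⟨m, h⟩ := by
    intro m h
    simp [hfdef, h]
  cases hlast : d ⟨n - 1, by omega⟩ with
  | true =>
    have hab : (a : ℕ) ≤ n - 1 := by
      have : (a : ℕ) ≠ n - 1 := by
        intro hc
        have : a = (⟨n - 1, by omega⟩ : Fin n) := Fin.ext hc
        rw [this, hlast] at ha; cases ha
      have := a.isLt
      omega
    obtain ⟨m, hm1, hm2, hm3, hm4⟩ := find_rise f (n - 1) a hab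
      (by rw [hfval a a.isLt]; simpa using ha)
      (by rw [hfval (n - 1) (by omega)]; exact hlast)
    have hmn : m + 1 < n := by omega
    exact valley ⟨m, by omega⟩ ⟨m + 1, hmn⟩ rfl
      (by rw [← hfval m (by omega)]; exact hm3)
      (by rw [← hfval (m + 1) hmn]; exact hm4)
  | false =>
    cases h0 : d ⟨0, hn⟩ with
    | true => exact seam hlast h0
    | false =>
      obtain ⟨m, hm1, hm2, hm3, hm4⟩ := find_rise f b 0 (Nat.zero_le _)
        (by rw [hfval 0 hn]; exact h0)
        (by rw [hfval b b.isLt]; simpa using hb)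
      have hmn : m + 1 < n := by have := b.isLt; omega
      exact valley ⟨m, by omega⟩ ⟨m + 1, hmn⟩ rfl
        (by rw [← hfval m (by omega)]; exact hm3)
        (by rw [← hfval (m + 1) hmn]; exact hm4)

end DigraphListHom
end

section
/- A bicycle in a digraph H gives rise to a circular N; consequently, if H contains no pair of independent edges, then H has no circular N if and only if H has no bicycle. -/
namespace DigraphListHom

variable {V W : Type*}

private lemma nonind {H : V → V → Prop} (hind : ¬ IndependentEdges H)
    {a b c d : V} (h1 : H a b) (h2 : H c d) (h3 : ¬ H a d) : H c b := by
  by_contra h4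
  exact hind ⟨a, b, c, d, h1, h2, h3, h4⟩

private lemma flip_nonind {H : V → V → Prop} (hind : ¬ IndependentEdges H) :
    ¬ IndependentEdges (fun a b => H b a) := by
  rintro ⟨a, b, c, d, h1, h2, h3, h4⟩
  exact hind ⟨d, c, b, a, h2, h1, h3, h4⟩

private lemma bicycle_of_flip {H : V → V → Prop} (h : Bicycle (fun a b => H b a)) :
    Bicycle H := by
  obtain ⟨n, hn, x, y, hxx, hyy, hstep⟩ := h
  refine ⟨n, hn, fun i => y i.rev, fun i => x i.rev, ?_, ?_, ?_⟩
  · simp only [Fin.rev_last, Fin.rev_zero]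
    exact hyy.symm
  · simp only [Fin.rev_last, Fin.rev_zero]
    exact hxx.symm
  · intro i
    have h1 : (i.castSucc).rev = (i.rev).succ := Fin.rev_castSucc i
    have h2 : (i.succ).rev = (i.rev).castSucc := Fin.rev_succ i
    obtain ⟨e1, e2, e3, e4⟩ := hstep i.rev
    refine ⟨?_, ?_, ?_, ?_⟩ <;> simp only [h1, h2]
    · exact e2
    · exact e1
    · exact e3
    · exact e4

private lemma fwd_main (H : V → V → Prop) (hind : ¬ IndependentEdges H)
    (n : ℕ) (hn : 0 < n) (x y z : Fin (n + 1) → V)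
    (hx : ∀ i : Fin n, H (x i.castSucc) (x i.succ))
    (hy : ∀ i : Fin n, H (y i.castSucc) (y i.succ))
    (hz : ∀ i : Fin n, H (z i.castSucc) (z i.succ))
    (hxx : x (Fin.last n) = x 0) (hyy : y (Fin.last n) = y 0)
    (hzy : z 0 = y 0) (hzx : z (Fin.last n) = x 0)
    (hav : ∀ i : Fin n, ¬ H (x i.castSucc) (y i.succ))
    (hpro : ∀ i j : Fin n, H (x i.castSucc) (z i.succ) → H (z j.castSucc) (y j.succ) →
      (j : ℕ) ≤ (i : ℕ)) :
    Bicycle H := by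
  classical
  set s : Finset (Fin n) :=
    Finset.univ.filter (fun j : Fin n => H (z j.castSucc) (y j.succ)) with hs
  have hne : s.Nonempty := by
    refine ⟨⟨0, hn⟩, ?_⟩
    simp only [hs, Finset.mem_filter, Finset.mem_univ, true_and]
    have h0 : z (⟨0, hn⟩ : Fin n).castSucc = y (⟨0, hn⟩ : Fin n).castSucc := by
      have e : (⟨0, hn⟩ : Fin n).castSucc = (0 : Fin (n + 1)) := rfl
      rw [e, hzy]
    rw [h0]
    exact hy _
  set t : Fin n := s.max' hne with ht
  have htB : H (z t.castSucc) (y t.succ) := by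
    have := s.max'_mem hne
    simp only [hs, Finset.mem_filter, Finset.mem_univ, true_and] at this
    exact this
  have htmax : ∀ j : Fin n, H (z j.castSucc) (y j.succ) → (j : ℕ) ≤ (t : ℕ) := by
    intro j hj
    exact Fin.le_def.mp (s.le_max' j (by simp [hs, hj]))
  have htn : (t : ℕ) < n := t.isLt
  have hnotA : ∀ i : Fin n, (i : ℕ) < (t : ℕ) → ¬ H (x i.castSucc) (z i.succ) := by
    intro i hi h
    exact absurd (hpro i t h htB) (by omega)
  have hnotB : ∀ i : Fin n, (t : ℕ) < (i : ℕ) → ¬ H (z i.castSucc) (y i.succ) := by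
    intro i hi h
    have := htmax i h
    omega
  have hzx' : ∀ i : Fin n, ¬ H (x i.castSucc) (z i.succ) → H (z i.castSucc) (x i.succ) :=
    fun i h => nonind hind (hx i) (hz i) h
  have hyz' : ∀ i : Fin n, ¬ H (z i.castSucc) (y i.succ) → H (y i.castSucc) (z i.succ) :=
    fun i h => nonind hind (hz i) (hy i) h
  have hyx' : ∀ i : Fin n, H (y i.castSucc) (x i.succ) :=
    fun i => nonind hind (hx i) (hy i) (hav i)
  by_cases htA : H (x t.castSucc) (z t.succ)
  · refine ⟨n, hn, (fun i => if (i : ℕ) ≤ (t : ℕ) then x i else z i),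
      (fun i => if (i : ℕ) ≤ (t : ℕ) then z i else y i), ?_, ?_, ?_⟩
    · beta_reduce
      rw [if_neg (show ¬ ((Fin.last n : Fin (n + 1)) : ℕ) ≤ (t : ℕ) from by rw [Fin.val_last]; omega),
        if_pos (show ((0 : Fin (n + 1)) : ℕ) ≤ (t : ℕ) from Nat.zero_le _)]
      exact hzx
    · beta_reduce
      rw [if_neg (show ¬ ((Fin.last n : Fin (n + 1)) : ℕ) ≤ (t : ℕ) from by rw [Fin.val_last]; omega),
        if_pos (show ((0 : Fin (n + 1)) : ℕ) ≤ (t : ℕ) from Nat.zero_le _)]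
      rw [hyy]
      exact hzy.symm
    · intro i
      have hct : ((i.castSucc : Fin (n + 1)) : ℕ) = (i : ℕ) := Fin.coe_castSucc i
      have hst : ((i.succ : Fin (n + 1)) : ℕ) = (i : ℕ) + 1 := Fin.val_succ i
      rcases Nat.lt_trichotomy (i : ℕ) (t : ℕ) with h | h | h
      · refine ⟨?_, ?_, ?_, ?_⟩ <;> simp only [hct, hst] <;>
          rw [if_pos (by omega), if_pos (by omega)]
        · exact hx i
        · exact hz i
        · exact hnotA i h
        · exact hzx' i (hnotA i h)
      · have hit : i = t := Fin.ext h
        subst hit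
        refine ⟨?_, ?_, ?_, ?_⟩ <;> simp only [hct, hst]
        · rw [if_pos (by omega), if_neg (by omega)]
          exact htA
        · rw [if_pos (by omega), if_neg (by omega)]
          exact htB
        · rw [if_pos (by omega), if_neg (by omega)]
          exact hav t
        · rw [if_pos (by omega), if_neg (by omega)]
          exact hz t
      · refine ⟨?_, ?_, ?_, ?_⟩ <;> simp only [hct, hst] <;>
          rw [if_neg (by omega), if_neg (by omega)]
        · exact hz i
        · exact hy i
        · exact hnotB i h
        · exact hyz' i (hnotB i h)
  · refine ⟨n, hn, x, (fun i => if (i : ℕ) ≤ (t : ℕ) then z i else y i), hxx, ?_, ?_⟩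
    · beta_reduce
      rw [if_neg (show ¬ ((Fin.last n : Fin (n + 1)) : ℕ) ≤ (t : ℕ) from by rw [Fin.val_last]; omega),
        if_pos (show ((0 : Fin (n + 1)) : ℕ) ≤ (t : ℕ) from Nat.zero_le _)]
      rw [hyy]
      exact hzy.symm
    · intro i
      have hct : ((i.castSucc : Fin (n + 1)) : ℕ) = (i : ℕ) := Fin.coe_castSucc i
      have hst : ((i.succ : Fin (n + 1)) : ℕ) = (i : ℕ) + 1 := Fin.val_succ i
      rcases Nat.lt_trichotomy (i : ℕ) (t : ℕ) with h | h | h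
      · refine ⟨hx i, ?_, ?_, ?_⟩ <;> simp only [hct, hst]
        · rw [if_pos (by omega), if_pos (by omega)]
          exact hz i
        · rw [if_pos (by omega)]
          exact hnotA i h
        · rw [if_pos (by omega)]
          exact hzx' i (hnotA i h)
      · have hit : i = t := Fin.ext h
        subst hit
        refine ⟨hx t, ?_, ?_, ?_⟩ <;> simp only [hct, hst]
        · rw [if_pos (by omega), if_neg (by omega)]
          exact htB
        · rw [if_neg (by omega)]
          exact hav t
        · rw [if_pos (by omega)]
          exact hzx' t htA
      · refine ⟨hx i, ?_, ?_, ?_⟩ <;> simp only [hct, hst]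
        · rw [if_neg (by omega), if_neg (by omega)]
          exact hy i
        · rw [if_neg (by omega)]
          exact hav i
        · rw [if_neg (by omega)]
          exact hyx' i

private lemma bic_to_circ {H : V → V → Prop} (h : Bicycle H) : CircularN H := by
  obtain ⟨n, hn, x, y, hxx, hyy, hstep⟩ := h
  have hlast0 : (0 : Fin (n + 1)) ≠ Fin.last n := by
    intro h0
    have := congrArg Fin.val h0
    simp only [Fin.val_zero, Fin.val_last] at this
    omega
  refine ⟨n, hn, fun _ => true, x, y,
    (fun i => if i = Fin.last n then x 0 else y i), ?_, ?_, ?_, hxx, hyy, ?_, ?_, ?_, ?_⟩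
  · intro i
    simpa [Step] using (hstep i).1
  · intro i
    simpa [Step] using (hstep i).2.1
  · intro i
    have hc : i.castSucc ≠ Fin.last n := (Fin.castSucc_lt_last i).ne
    by_cases hsuc : i.succ = Fin.last n
    · simp only [Step, if_true, if_neg hc, if_pos hsuc]
      have := (hstep i).2.2.2
      rw [hsuc, hxx] at this
      simpa using this
    · simp only [Step, if_true, if_neg hc, if_neg hsuc]
      simpa using (hstep i).2.1
  · exact if_neg hlast0
  · exact if_pos rfl
  · intro i hf
    simp only [FaithfulAt, Step, if_true] at hf
    exact (hstep i).2.2.1 (by simpa using hf)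
  · intro i j hi hj
    simp only [FaithfulAt, Step, if_true] at hi
    by_cases hsuc : i.succ = Fin.last n
    · have h1 : (i : ℕ) + 1 = n := by
        have := congrArg Fin.val hsuc
        simpa [Fin.val_succ, Fin.val_last] using this
      have := j.isLt
      omega
    · rw [if_neg hsuc] at hi
      exact absurd (by simpa using hi) ((hstep i).2.2.1)

private lemma circ_to_bic {H : V → V → Prop} (hind : ¬ IndependentEdges H)
    (hc : CircularN H) : Bicycle H := by
  obtain ⟨n, hn, d, x, y, z, hx, hy, hz, hxx, hyy, hzy, hzx, hav, hpro⟩ := hc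
  have hadj : ∀ i j : Fin n, (i : ℕ) + 1 = (j : ℕ) → d i = d j := by
    intro i j hij
    have hes : i.succ = j.castSucc := Fin.ext (by simp [Fin.val_succ, Fin.coe_castSucc, hij])
    by_contra hne
    cases hdi : d i <;> cases hdj : d j
    · rw [hdi, hdj] at hne; exact hne rfl
    · -- i backward, j forward
      have exi : H (x i.succ) (x i.castSucc) := by
        have := hx i; rw [hdi] at this; simpa [Step] using this
      have eyj : H (y j.castSucc) (y j.succ) := by
        have := hy j; rw [hdj] at this; simpa [Step] using this
      have a1 : ¬ H (y i.succ) (x i.castSucc) := by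
        have := hav i; simp only [FaithfulAt, hdi, Step] at this; simpa using this
      have a2 : ¬ H (x j.castSucc) (y j.succ) := by
        have := hav j; simp only [FaithfulAt, hdj, Step] at this; simpa using this
      exact hind ⟨y j.castSucc, y j.succ, x i.succ, x i.castSucc, eyj, exi,
        by rw [← hes]; exact a1, by rw [hes]; exact a2⟩
    · -- i forward, j backward
      have exi : H (x i.castSucc) (x i.succ) := by
        have := hx i; rw [hdi] at this; simpa [Step] using this
      have eyj : H (y j.succ) (y j.castSucc) := by
        have := hy j; rw [hdj] at this; simpa [Step] using this
      have a1 : ¬ H (x i.castSucc) (y i.succ) := by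
        have := hav i; simp only [FaithfulAt, hdi, Step] at this; simpa using this
      have a2 : ¬ H (y j.succ) (x j.castSucc) := by
        have := hav j; simp only [FaithfulAt, hdj, Step] at this; simpa using this
      exact hind ⟨x i.castSucc, x i.succ, y j.succ, y j.castSucc, exi, eyj,
        by rw [← hes]; exact a1, by rw [hes]; exact a2⟩
    · rw [hdi, hdj] at hne; exact hne rfl
  have hconstN : ∀ k : ℕ, ∀ hk : k < n, d ⟨k, hk⟩ = d ⟨0, hn⟩ := by
    intro k
    induction k with
    | zero => intro hk; rfl
    | succ m ih =>
      intro hk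
      have hm : m < n := by omega
      rw [← hadj ⟨m, hm⟩ ⟨m + 1, hk⟩ rfl]
      exact ih hm
  have hconst : ∀ i : Fin n, d i = d ⟨0, hn⟩ := by
    intro i
    have := hconstN i.val i.isLt
    simpa [Fin.eta] using this
  cases hd0 : d ⟨0, hn⟩ with
  | false =>
    apply bicycle_of_flip
    refine fwd_main (fun a b => H b a) (flip_nonind hind) n hn x y z
      ?_ ?_ ?_ hxx hyy hzy hzx ?_ ?_
    · intro i
      have h1 := hx i; rw [hconst i, hd0] at h1; simpa [Step] using h1
    · intro i
      have h1 := hy i; rw [hconst i, hd0] at h1; simpa [Step] using h1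
    · intro i
      have h1 := hz i; rw [hconst i, hd0] at h1; simpa [Step] using h1
    · intro i h1
      apply hav i
      simp only [FaithfulAt, hconst i, hd0, Step]
      simpa using h1
    · intro i j h1 h2
      refine hpro i j ?_ ?_
      · simp only [FaithfulAt, hconst i, hd0, Step]; simpa using h1
      · simp only [FaithfulAt, hconst j, hd0, Step]; simpa using h2
  | true =>
    refine fwd_main H hind n hn x y z ?_ ?_ ?_ hxx hyy hzy hzx ?_ ?_
    · intro i
      have h1 := hx i; rw [hconst i, hd0] at h1; simpa [Step] using h1
    · intro i
      have h1 := hy i; rw [hconst i, hd0] at h1; simpa [Step] using h1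
    · intro i
      have h1 := hz i; rw [hconst i, hd0] at h1; simpa [Step] using h1
    · intro i h1
      apply hav i
      simp only [FaithfulAt, hconst i, hd0, Step]
      simpa using h1
    · intro i j h1 h2
      refine hpro i j ?_ ?_
      · simp only [FaithfulAt, hconst i, hd0, Step]; simpa using h1
      · simp only [FaithfulAt, hconst j, hd0, Step]; simpa using h2


/-- a bicycle gives a circular `N`; hence, without independent edges,
no circular `N` iff no bicycle. -/
theorem statement14 (H : V → V → Prop) :
    (Bicycle H → CircularN H) ∧
    (¬ IndependentEdges H → (¬ CircularN H ↔ ¬ Bicycle H)) := by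
  refine ⟨fun hb => bic_to_circ hb, fun hind => ⟨fun hnc hb => hnc (bic_to_circ hb),
    fun hnb hc => hnb (circ_to_bic hind hc)⟩⟩

end DigraphListHom
end
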